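/- arXiv:1512.05834 — 7 statements merged into one kernel-verified Lean document; each statement's English description precedes it below -/
import Mathlib

section
/- The Weak Spectral Property is an open property: if an n×n real symmetric matrix A has the WSP, then there exists ε > 0 such that for every n×n real symmetric matrix E with ‖E‖ < ε, the matrix A + E has the WSP. -/
open scoped Matrix.Norms.L2Operator

/-- A real symmetric matrix `A` has the Weak Spectral Property (WSP) if the only real
symmetric matrix `X` with zero diagonal that commutes with `A` is `X = 0`. -/
def HasWSP {ι : Type*} [Fintype ι] [DecidableEq ι] (A : Matrix ι ι ℝ) : Prop :=
  ∀ X : Matrix ι ι ℝ, X.IsSymm → (∀ i, X i i = 0) → X * A = A * X → X = 0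

/-- The WSP is an open property: if `A` has the WSP, then every sufficiently small
symmetric perturbation `A + E` of `A` also has the WSP.  Here `‖·‖` is the operator norm
induced by the Euclidean vector norm. -/
theorem hasWSP_open {n : ℕ} (A : Matrix (Fin n) (Fin n) ℝ) (hA : A.IsSymm)
    (hW : HasWSP A) :
    ∃ ε > 0, ∀ E : Matrix (Fin n) (Fin n) ℝ, E.IsSymm → ‖E‖ < ε → HasWSP (A + E) := by
  classical
  set S : Submodule ℝ (Matrix (Fin n) (Fin n) ℝ) :=
    { carrier := {X | X.IsSymm ∧ ∀ i, X i i = 0}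
      add_mem' := by
        rintro X Y ⟨hX1, hX2⟩ ⟨hY1, hY2⟩
        refine ⟨?_, fun i => by simp [Matrix.add_apply, hX2 i, hY2 i]⟩
        simp [Matrix.IsSymm, Matrix.transpose_add, hX1.eq, hY1.eq]
      zero_mem' := ⟨Matrix.isSymm_zero, fun i => rfl⟩
      smul_mem' := by
        rintro c X ⟨hX1, hX2⟩
        refine ⟨?_, fun i => by simp [hX2 i]⟩
        simp [Matrix.IsSymm, Matrix.transpose_smul, hX1.eq] } with hS
  set g : S →ₗ[ℝ] Matrix (Fin n) (Fin n) ℝ :=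
    ((LinearMap.mulRight ℝ A) - (LinearMap.mulLeft ℝ A)).comp S.subtype with hg
  have hker : LinearMap.ker g = ⊥ := by
    rw [LinearMap.ker_eq_bot']
    rintro ⟨X, hX1, hX2⟩ hX0
    have h0 : X * A - A * X = 0 := hX0
    have hc : X * A = A * X := sub_eq_zero.mp h0
    exact Subtype.ext (hW X hX1 hX2 hc)
  obtain ⟨K, hK, hanti⟩ := g.exists_antilipschitzWith hker
  refine ⟨(2 * K)⁻¹, by positivity, ?_⟩
  intro E hEs hEε X hX1 hX2 hcomm
  by_contra hne
  set x : S := ⟨X, hX1, hX2⟩ with hx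
  have hxne : x ≠ 0 := fun h => hne (congrArg Subtype.val h)
  have hgx : g x = E * X - X * E := by
    simp only [hg, LinearMap.comp_apply, LinearMap.sub_apply, LinearMap.mulRight_apply,
      LinearMap.mulLeft_apply, Submodule.subtype_apply]
    rw [Matrix.mul_add, Matrix.add_mul] at hcomm
    rw [sub_eq_sub_iff_add_eq_add, hcomm, add_comm]
  have h1 : ‖x‖ ≤ K * ‖g x‖ := by
    have := hanti.le_mul_dist x 0
    simpa [dist_eq_norm] using this
  have hxnorm : ‖x‖ = ‖X‖ := rfl
  have h2 : ‖g x‖ ≤ 2 * ‖E‖ * ‖X‖ := by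
    rw [hgx]
    calc ‖E * X - X * E‖ ≤ ‖E * X‖ + ‖X * E‖ := norm_sub_le _ _
    _ ≤ ‖E‖ * ‖X‖ + ‖X‖ * ‖E‖ := add_le_add (norm_mul_le _ _) (norm_mul_le _ _)
    _ = 2 * ‖E‖ * ‖X‖ := by ring
  have hXpos : 0 < ‖X‖ := norm_pos_iff.2 hne
  have hKpos : (0:ℝ) < K := hK
  have : ‖X‖ < ‖X‖ := by
    calc ‖X‖ = ‖x‖ := hxnorm.symm
    _ ≤ K * ‖g x‖ := h1
    _ ≤ K * (2 * ‖E‖ * ‖X‖) := by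
        exact mul_le_mul_of_nonneg_left h2 (le_of_lt hKpos)
    _ < K * (2 * (2*K)⁻¹ * ‖X‖) := by
        apply mul_lt_mul_of_pos_left _ hKpos
        apply mul_lt_mul_of_pos_right _ hXpos
        exact mul_lt_mul_of_pos_left hEε two_pos
    _ = ‖X‖ := by push_cast; field_simp
  exact lt_irrefl _ this
end

section
/- Let A and B be real symmetric matrices (of sizes m×m and k×k respectively) that both have the Weak Spectral Property and that have no common eigenvalue. Then the block-diagonal direct sum A ⊕ B (the (m+k)×(m+k) matrix with blocks A and B on the diagonal and zeros elsewhere) also has the Weak Spectral Property. -/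
/-- Sylvester: if `A` and `B` are symmetric with disjoint real spectra and `A * Q = Q * B`,
then `Q = 0`. -/
lemma sylvester_eq_zero {n p : Type*} [Fintype n] [Fintype p] [DecidableEq n] [DecidableEq p]
    {A : Matrix n n ℝ} {B : Matrix p p ℝ} (hA : A.IsHermitian) (hB : B.IsHermitian)
    (hdisj : ∀ μ : ℝ, ¬ (μ ∈ spectrum ℝ A ∧ μ ∈ spectrum ℝ B))
    (Q : Matrix n p ℝ) (hQ : A * Q = Q * B) : Q = 0 := by
  set U : Matrix n n ℝ := (hA.eigenvectorUnitary : Matrix n n ℝ)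
  set V : Matrix p p ℝ := (hB.eigenvectorUnitary : Matrix p p ℝ)
  set M : Matrix n p ℝ := star U * Q * V with hM
  have hUU : U * star U = 1 := (Matrix.mem_unitaryGroup_iff).mp hA.eigenvectorUnitary.2
  have hVV : star V * V = 1 := (Matrix.mem_unitaryGroup_iff').mp hB.eigenvectorUnitary.2
  have hDA : star U * A * U = Matrix.diagonal (RCLike.ofReal ∘ hA.eigenvalues) :=
    by have h := hA.conjStarAlgAut_star_eigenvectorUnitary; rwa [Unitary.conjStarAlgAut_star_apply] at h
  have hDB : star V * B * V = Matrix.diagonal (RCLike.ofReal ∘ hB.eigenvalues) :=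
    by have h := hB.conjStarAlgAut_star_eigenvectorUnitary; rwa [Unitary.conjStarAlgAut_star_apply] at h
  have key : Matrix.diagonal (RCLike.ofReal ∘ hA.eigenvalues) * M
      = M * Matrix.diagonal (RCLike.ofReal ∘ hB.eigenvalues) := by
    rw [← hDA, ← hDB, hM]
    calc star U * A * U * (star U * Q * V)
        = star U * (A * (U * star U) * Q) * V := by simp only [Matrix.mul_assoc]
      _ = star U * (Q * B) * V := by rw [hUU, Matrix.mul_one, hQ]
      _ = star U * Q * V * (star V * B * V) := by
          rw [show star U * Q * V * (star V * B * V) = star U * (Q * ((V * star V) * B)) * V by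
            simp only [Matrix.mul_assoc], (Matrix.mem_unitaryGroup_iff).mp hB.eigenvectorUnitary.2,
            Matrix.one_mul]
  have hM0 : M = 0 := by
    ext i j
    have := Matrix.ext_iff.mpr key i j
    replace this := (Matrix.diagonal_mul (RCLike.ofReal ∘ hA.eigenvalues) M i j).symm.trans
      (this.trans (Matrix.mul_diagonal (RCLike.ofReal ∘ hB.eigenvalues) M i j))
    have hne : hA.eigenvalues i ≠ hB.eigenvalues j := by
      intro h
      exact hdisj (hA.eigenvalues i) ⟨hA.eigenvalues_mem_spectrum_real i,
        h ▸ hB.eigenvalues_mem_spectrum_real j⟩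
    simp only [Function.comp_apply, RCLike.ofReal_real_eq_id, id_eq] at this
    have : (hA.eigenvalues i - hB.eigenvalues j) * M i j = 0 := by ring_nf; linarith [this]
    rcases mul_eq_zero.mp this with h | h
    · exact absurd (sub_eq_zero.mp h) hne
    · simpa using h
  have : Q = U * M * star V := by
    rw [hM]
    calc Q = (U * star U) * Q * (V * star V) := by
            rw [hUU, (Matrix.mem_unitaryGroup_iff).mp hB.eigenvectorUnitary.2,
              Matrix.one_mul, Matrix.mul_one]
      _ = U * (star U * Q * V) * star V := by simp only [Matrix.mul_assoc]
  rw [this, hM0, Matrix.mul_zero, Matrix.zero_mul]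

/-- If the real symmetric matrices `A` (of size `m × m`) and `B` (of size `k × k`) both
have the WSP and have no common eigenvalue, then their block-diagonal direct sum
`A ⊕ B` also has the WSP. -/
theorem hasWSP_fromBlocks {m k : ℕ}
    (A : Matrix (Fin m) (Fin m) ℝ) (B : Matrix (Fin k) (Fin k) ℝ)
    (hA : A.IsSymm) (hB : B.IsSymm) (hAW : HasWSP A) (hBW : HasWSP B)
    (hdisj : ∀ μ : ℝ, ¬ (μ ∈ spectrum ℝ A ∧ μ ∈ spectrum ℝ B)) :
    HasWSP (Matrix.fromBlocks A 0 0 B) := by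
  intro X hX hXd hXc
  have hXb : X = Matrix.fromBlocks X.toBlocks₁₁ X.toBlocks₁₂ X.toBlocks₂₁ X.toBlocks₂₂ :=
    (Matrix.fromBlocks_toBlocks X).symm
  rw [hXb] at hXc
  rw [Matrix.fromBlocks_multiply, Matrix.fromBlocks_multiply] at hXc
  simp only [Matrix.mul_zero, Matrix.zero_mul, add_zero, zero_add] at hXc
  have h11 := congrArg Matrix.toBlocks₁₁ hXc
  have h12 := congrArg Matrix.toBlocks₁₂ hXc
  have h21 := congrArg Matrix.toBlocks₂₁ hXc
  have h22 := congrArg Matrix.toBlocks₂₂ hXc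
  simp only [Matrix.toBlocks_fromBlocks₁₁, Matrix.toBlocks_fromBlocks₁₂,
    Matrix.toBlocks_fromBlocks₂₁, Matrix.toBlocks_fromBlocks₂₂] at h11 h12 h21 h22
  rw [hXb] at hX
  obtain ⟨hP, hQR, hS2⟩ := Matrix.isSymm_fromBlocks_iff.mp hX
  have hS := hS2.2
  have hAh : A.IsHermitian := hA
  have hBh : B.IsHermitian := hB
  have hQ0 : X.toBlocks₁₂ = 0 := by
    refine sylvester_eq_zero hAh hBh hdisj X.toBlocks₁₂ ?_
    exact h12.symm
  have hR0 : X.toBlocks₂₁ = 0 := by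
    refine sylvester_eq_zero hBh hAh (fun μ h => hdisj μ ⟨h.2, h.1⟩) X.toBlocks₂₁ ?_
    exact h21.symm
  have hP0 : X.toBlocks₁₁ = 0 := hAW _ hP (fun i => hXd (Sum.inl i)) h11
  have hS0 : X.toBlocks₂₂ = 0 := hBW _ hS (fun i => hXd (Sum.inr i)) h22
  rw [hXb, hP0, hQ0, hR0, hS0, Matrix.fromBlocks_zero]
end

section
/- If an n×n real symmetric matrix A has the Weak Spectral Property and c is a real number that is not an eigenvalue of A, then the (n+1)×(n+1) matrix A ⊕ [c] (the block-diagonal matrix with blocks A and the 1×1 matrix [c]) has the Weak Spectral Property. -/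
/-- If an `n × n` real symmetric matrix `A` has the WSP and `c` is a real number that is
not an eigenvalue of `A`, then the `(n+1) × (n+1)` block-diagonal matrix `A ⊕ [c]`
has the WSP. -/
theorem hasWSP_append_scalar {n : ℕ} (A : Matrix (Fin n) (Fin n) ℝ) (hA : A.IsSymm)
    (hW : HasWSP A) (c : ℝ) (hc : c ∉ spectrum ℝ A) :
    HasWSP ((Matrix.reindex finSumFinEquiv finSumFinEquiv
      (Matrix.fromBlocks A 0 0 (Matrix.of fun _ _ : Fin 1 => c))) :
        Matrix (Fin (n + 1)) (Fin (n + 1)) ℝ) := by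
  intro X hXs hXd hXc
  set e : Fin n ⊕ Fin 1 ≃ Fin (n + 1) := finSumFinEquiv with he
  set C : Matrix (Fin 1) (Fin 1) ℝ := Matrix.of fun _ _ => c with hC
  set B : Matrix (Fin n ⊕ Fin 1) (Fin n ⊕ Fin 1) ℝ := Matrix.fromBlocks A 0 0 C with hB
  set Y : Matrix (Fin n ⊕ Fin 1) (Fin n ⊕ Fin 1) ℝ := X.submatrix e e with hY
  -- Y commutes with B
  have hYc : Y * B = B * Y := by
    have h1 : (X * Matrix.reindex e e B).submatrix e e
        = (Matrix.reindex e e B * X).submatrix e e := by rw [hXc]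
    have h2 : (Matrix.reindex e e B).submatrix e e = B := by
      ext i j
      simp [Matrix.reindex_apply, Matrix.submatrix_apply]
    calc Y * B = (X.submatrix e e) * ((Matrix.reindex e e B).submatrix e e) := by rw [h2]
      _ = (X * Matrix.reindex e e B).submatrix e e := by
          rw [Matrix.submatrix_mul_equiv]
      _ = (Matrix.reindex e e B * X).submatrix e e := h1
      _ = ((Matrix.reindex e e B).submatrix e e) * (X.submatrix e e) := by
          rw [Matrix.submatrix_mul_equiv]
      _ = B * Y := by rw [h2]
  have hYs : Y.IsSymm := by
    rw [Matrix.IsSymm, hY, Matrix.transpose_submatrix, hXs]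
  -- blocks of Y
  set Y11 := Y.toBlocks₁₁ with hY11
  set Y12 := Y.toBlocks₁₂ with hY12
  set Y21 := Y.toBlocks₂₁ with hY21
  set Y22 := Y.toBlocks₂₂ with hY22
  have hYblocks : Y = Matrix.fromBlocks Y11 Y12 Y21 Y22 := (Matrix.fromBlocks_toBlocks Y).symm
  have hmul : Matrix.fromBlocks (Y11 * A) (Y12 * C) (Y21 * A) (Y22 * C)
      = Matrix.fromBlocks (A * Y11) (A * Y12) (C * Y21) (C * Y22) := by
    have := hYc
    rw [hYblocks, hB, Matrix.fromBlocks_multiply, Matrix.fromBlocks_multiply] at this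
    simpa using this
  have h11 : Y11 * A = A * Y11 := congrArg Matrix.toBlocks₁₁ hmul
  have h12 : Y12 * C = A * Y12 := congrArg Matrix.toBlocks₁₂ hmul
  -- Y11 = 0 via WSP
  have hY11s : Y11.IsSymm := by
    ext i j
    have := congrFun (congrFun hYs (Sum.inl i)) (Sum.inl j)
    simpa [hY11, Matrix.toBlocks₁₁] using this
  have hY11d : ∀ i, Y11 i i = 0 := by
    intro i
    simpa [hY11, Matrix.toBlocks₁₁, hY] using hXd (e (Sum.inl i))
  have hY11z : Y11 = 0 := hW Y11 hY11s hY11d h11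
  -- Y22 = 0 (1×1 with zero diagonal)
  have hY22z : Y22 = 0 := by
    ext i j
    fin_cases i ; fin_cases j
    simpa [hY22, Matrix.toBlocks₂₂, hY] using hXd (e (Sum.inr 0))
  -- Y12 = 0 using that c is not an eigenvalue
  have hYC : Y12 * C = c • Y12 := by
    ext i j
    fin_cases j
    simp [Matrix.mul_apply, Fin.sum_univ_one, hC, mul_comm]
  have hker : (algebraMap ℝ (Matrix (Fin n) (Fin n) ℝ) c - A) * Y12 = 0 := by
    rw [Algebra.algebraMap_eq_smul_one, Matrix.sub_mul, Matrix.smul_mul, Matrix.one_mul,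
      ← h12, hYC, sub_self]
  have hU : IsUnit (algebraMap ℝ (Matrix (Fin n) (Fin n) ℝ) c - A) := by
    rwa [spectrum.notMem_iff] at hc
  have hY12z : Y12 = 0 := by
    obtain ⟨u, hu⟩ := hU
    calc Y12 = (↑u⁻¹ * ↑u : Matrix (Fin n) (Fin n) ℝ) * Y12 := by
          rw [u.inv_mul, Matrix.one_mul]
      _ = (↑u⁻¹ : Matrix (Fin n) (Fin n) ℝ) * ((↑u : Matrix (Fin n) (Fin n) ℝ) * Y12) := by
          rw [Matrix.mul_assoc]
      _ = 0 := by rw [hu, hker, Matrix.mul_zero]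
  have hY21z : Y21 = 0 := by
    ext i j
    have h0 := congrFun (congrFun hY12z j) i
    have hs := congrFun (congrFun hYs (Sum.inr i)) (Sum.inl j)
    simp only [Matrix.transpose_apply] at hs
    simp only [hY21, Matrix.toBlocks₂₁, Matrix.of_apply, Matrix.zero_apply, ← hs]
    simpa [hY12, Matrix.toBlocks₁₂] using h0
  have hYz : Y = 0 := by
    rw [hYblocks, hY11z, hY12z, hY21z, hY22z, Matrix.fromBlocks_zero]
  ext i j
  have := congrFun (congrFun hYz (e.symm i)) (e.symm j)
  simpa [hY] using this
end

section
/- Given a simple graph G on n vertices labeled 1,…,n and a set Λ = {λ₁, λ₂, …, λₙ} of n distinct real numbers, there exists an n×n real symmetric matrix A whose graph is G and whose multiset of eigenvalues is exactly Λ (each λᵢ with multiplicity one). -/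
open Polynomial Matrix Finset

noncomputable section SIEPAux

namespace SIEP

variable {n : ℕ}

/-- Parameter space: diagonal entries and (raw, unsymmetrized) edge parameters. -/
abbrev P (n : ℕ) := (Fin n → ℝ) × (Fin n × Fin n → ℝ)

open Classical in
/-- The symmetric matrix built from parameters. -/
def matA (G : SimpleGraph (Fin n)) (p : P n) : Matrix (Fin n) (Fin n) ℝ :=
  Matrix.of fun i j => if i = j then p.1 i else
    if G.Adj i j then p.2 (i, j) + p.2 (j, i) else 0

open Classical in
lemma matA_apply (G : SimpleGraph (Fin n)) (p : P n) (i j : Fin n) :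
    matA G p i j = if i = j then p.1 i else
      if G.Adj i j then p.2 (i, j) + p.2 (j, i) else 0 := rfl

lemma matA_isSymm (G : SimpleGraph (Fin n)) (p : P n) : (matA G p).IsSymm := by
  classical
  ext i j
  simp only [Matrix.transpose_apply, matA_apply]
  by_cases h : i = j
  · subst h; simp
  · rw [if_neg h, if_neg (Ne.symm h)]
    by_cases hadj : G.Adj i j
    · rw [if_pos (G.adj_symm hadj), if_pos hadj, add_comm]
    · rw [if_neg (fun hs => hadj (G.adj_symm hs)), if_neg hadj]

lemma matA_diag (G : SimpleGraph (Fin n)) (d : Fin n → ℝ) :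
    matA G (d, 0) = Matrix.diagonal d := by
  classical
  ext i j
  by_cases h : i = j
  · subst h; simp [matA_apply]
  · simp [matA_apply, h, Matrix.diagonal_apply_ne _ h]

open Classical in
/-- The matrix `t•1 - matA G p`. -/
def cmM (G : SimpleGraph (Fin n)) (t : ℝ) (p : P n) : Matrix (Fin n) (Fin n) ℝ :=
  Matrix.of fun i j => if i = j then t - p.1 i else
    if G.Adj i j then -(p.2 (i, j) + p.2 (j, i)) else 0

open Classical in
lemma cmM_apply (G : SimpleGraph (Fin n)) (t : ℝ) (p : P n) (i j : Fin n) :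
    cmM G t p i j = if i = j then t - p.1 i else
      if G.Adj i j then -(p.2 (i, j) + p.2 (j, i)) else 0 := rfl

lemma eval_charpoly (G : SimpleGraph (Fin n)) (t : ℝ) (p : P n) :
    (matA G p).charpoly.eval t = (cmM G t p).det := by
  classical
  rw [Matrix.charpoly, show (Polynomial.eval t : ℝ[X] → ℝ) = ⇑(Polynomial.evalRingHom t) from rfl,
    RingHom.map_det]
  congr 1
  ext i j
  by_cases h : i = j
  · subst h
    simp [RingHom.mapMatrix_apply, Matrix.map_apply, Matrix.charmatrix_apply_eq, cmM_apply,
      matA_apply]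
  · rw [RingHom.mapMatrix_apply, Matrix.map_apply, Matrix.charmatrix_apply_ne _ _ _ h, cmM_apply,
      if_neg h, matA_apply, if_neg h]
    by_cases hadj : G.Adj i j <;> simp [hadj]

/-- Interpolation nodes `0, 1, …, n`. -/
def v (n : ℕ) : Fin (n + 1) → ℝ := fun m => (m.1 : ℝ)

lemma v_inj : Function.Injective (v n) := fun _ _ h => Fin.ext (Nat.cast_injective h)

/-- Lagrange coefficients. -/
def c (n : ℕ) (k : Fin n) (m : Fin (n + 1)) : ℝ :=
  (Lagrange.basis Finset.univ (v n) m).coeff k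

/-- Every coefficient of a polynomial of degree `< n+1` is a fixed linear combination of its
values at the nodes. -/
lemma coeff_eq_sum (p : ℝ[X]) (hp : p.degree < (n + 1 : ℕ)) (k : Fin n) :
    p.coeff k = ∑ m : Fin (n + 1), p.eval (v n m) * c n k m := by
  classical
  have hrep := Lagrange.eq_interpolate (s := Finset.univ) (v := v n) v_inj.injOn
    (f := p) (by simpa using hp)
  conv_lhs => rw [hrep]
  rw [Lagrange.interpolate_apply, Polynomial.finset_sum_coeff]
  simp [c, Polynomial.coeff_C_mul]

/-- The (low) coefficients of the characteristic polynomial of `matA G p`, as an explicit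
function of the parameters. -/
def F (G : SimpleGraph (Fin n)) (p : P n) : Fin n → ℝ :=
  fun k => ∑ m : Fin (n + 1), (cmM G (v n m) p).det * c n k m

lemma charpoly_degree_lt (A : Matrix (Fin n) (Fin n) ℝ) : A.charpoly.degree < (n + 1 : ℕ) := by
  rw [Matrix.charpoly_degree_eq_dim, Fintype.card_fin]
  exact_mod_cast Nat.lt_succ_self n

lemma F_coeff (G : SimpleGraph (Fin n)) (p : P n) (k : Fin n) :
    F G p k = (matA G p).charpoly.coeff k := by
  rw [coeff_eq_sum _ (charpoly_degree_lt _) k]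
  exact (Finset.sum_congr rfl fun m _ => by rw [eval_charpoly]).symm

lemma cmM_diag (G : SimpleGraph (Fin n)) (t : ℝ) (d : Fin n → ℝ) :
    cmM G t (d, (0 : Fin n × Fin n → ℝ)) = Matrix.diagonal (fun i => t - d i) := by
  classical
  ext i j
  by_cases h : i = j
  · subst h; simp [cmM_apply]
  · simp [cmM_apply, h, Matrix.diagonal_apply_ne _ h]

lemma F_diag (G : SimpleGraph (Fin n)) (d : Fin n → ℝ) :
    F G (d, 0) = fun k => ∑ m : Fin (n + 1), (∏ i, (v n m - d i)) * c n k m := by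
  funext k
  simp [F, cmM_diag, Matrix.det_diagonal]

lemma contDiff_entry (G : SimpleGraph (Fin n)) (t : ℝ) (i j : Fin n) :
    ContDiff ℝ 1 (fun p : P n => cmM G t p i j) := by
  classical
  simp only [cmM_apply]
  split_ifs
  · exact contDiff_const.sub
      (((ContinuousLinearMap.proj i : (Fin n → ℝ) →L[ℝ] ℝ).comp
        (ContinuousLinearMap.fst ℝ (Fin n → ℝ) (Fin n × Fin n → ℝ))).contDiff)
  · exact ((((ContinuousLinearMap.proj (i, j) : (Fin n × Fin n → ℝ) →L[ℝ] ℝ).comp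
        (ContinuousLinearMap.snd ℝ (Fin n → ℝ) (Fin n × Fin n → ℝ))).contDiff).add
      (((ContinuousLinearMap.proj (j, i) : (Fin n × Fin n → ℝ) →L[ℝ] ℝ).comp
        (ContinuousLinearMap.snd ℝ (Fin n → ℝ) (Fin n × Fin n → ℝ))).contDiff)).neg
  · exact contDiff_const

lemma contDiff_F (G : SimpleGraph (Fin n)) : ContDiff ℝ 1 (F G) := by
  classical
  rw [contDiff_pi]
  intro k
  simp only [F, Matrix.det_apply']
  refine ContDiff.sum fun m _ => ContDiff.mul ?_ contDiff_const
  refine ContDiff.sum fun σ _ => ContDiff.mul contDiff_const ?_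
  exact contDiff_prod fun i _ => contDiff_entry G (v n m) (σ i) i

/-- The derivative of `d ↦ F G (d, 0)` at `l`. -/
def D1 (n : ℕ) (l : Fin n → ℝ) : (Fin n → ℝ) →L[ℝ] (Fin n → ℝ) :=
  ContinuousLinearMap.pi fun k => ∑ m : Fin (n + 1), c n k m •
    ∑ i : Fin n, (∏ j ∈ Finset.univ.erase i, (v n m - l j)) •
      (-(ContinuousLinearMap.proj i : (Fin n → ℝ) →L[ℝ] ℝ))

lemma D1_apply (l : Fin n → ℝ) (w : Fin n → ℝ) (k : Fin n) :
    D1 n l w k = ∑ m : Fin (n + 1), c n k m *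
      ∑ i : Fin n, (∏ j ∈ Finset.univ.erase i, (v n m - l j)) * (-(w i)) := by
  simp [D1, ContinuousLinearMap.pi_apply, ContinuousLinearMap.sum_apply,
    ContinuousLinearMap.smul_apply, ContinuousLinearMap.neg_apply,
    ContinuousLinearMap.proj_apply, smul_eq_mul]

lemma hasFDerivAt_h (G : SimpleGraph (Fin n)) (l : Fin n → ℝ) :
    HasFDerivAt (fun d => F G (d, 0)) (D1 n l) l := by
  have heq : (fun d : Fin n → ℝ => F G (d, 0)) =
      fun d k => ∑ m : Fin (n + 1), (∏ i, (v n m - d i)) * c n k m :=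
    funext fun d => F_diag G d
  rw [heq]
  unfold D1
  refine hasFDerivAt_pi.2 fun k => ?_
  refine HasFDerivAt.fun_sum fun m _ => ?_
  exact (HasFDerivAt.finset_prod (fun i _ =>
    HasFDerivAt.const_sub (hasFDerivAt_apply i l) (v n m))).mul_const (c n k m)

lemma D1_inj (l : Fin n → ℝ) (hl : Function.Injective l) (w : Fin n → ℝ)
    (hw : D1 n l w = 0) : w = 0 := by
  classical
  funext t
  simp only [Pi.zero_apply]
  set q : ℝ[X] := ∑ i : Fin n, C (w i) * ∏ j ∈ Finset.univ.erase i, (X - C (l j)) with hq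
  have hqnd : q.natDegree ≤ n - 1 := by
    apply Polynomial.natDegree_sum_le_of_forall_le
    intro i _
    refine le_trans (natDegree_C_mul_le _ _) (le_trans (natDegree_prod_le _ _) ?_)
    have h1 : ∀ j ∈ Finset.univ.erase i, (X - C (l j)).natDegree = 1 := fun j _ =>
      natDegree_X_sub_C _
    rw [Finset.sum_congr rfl h1]
    simp [Finset.card_erase_of_mem]
  have hqev : ∀ x : ℝ, q.eval x =
      ∑ i : Fin n, w i * ∏ j ∈ Finset.univ.erase i, (x - l j) := by
    intro x
    simp [hq, eval_finset_sum, eval_prod]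
  have hqc : ∀ k : Fin n, q.coeff k = 0 := by
    intro k
    have h1 : q.degree < (n + 1 : ℕ) := by
      refine lt_of_le_of_lt Polynomial.degree_le_natDegree ?_
      exact_mod_cast lt_of_le_of_lt hqnd (by omega)
    have h2 : D1 n l w k = 0 := by rw [hw]; rfl
    calc q.coeff k = ∑ m : Fin (n + 1), q.eval (v n m) * c n k m := coeff_eq_sum q h1 k
      _ = -(D1 n l w k) := by
          rw [D1_apply, ← Finset.sum_neg_distrib]
          refine Finset.sum_congr rfl fun m _ => ?_
          rw [hqev (v n m), Finset.sum_mul, Finset.mul_sum, ← Finset.sum_neg_distrib]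
          exact Finset.sum_congr rfl fun i _ => by ring
      _ = 0 := by rw [h2, neg_zero]
  have hq0 : q = 0 := by
    ext k
    rcases lt_or_ge k n with h | h
    · simpa using hqc ⟨k, h⟩
    · rw [coeff_eq_zero_of_natDegree_lt, coeff_zero]
      have hn : 0 < n := t.pos
      omega
  have he : (0 : ℝ) = ∑ i : Fin n, w i * ∏ j ∈ Finset.univ.erase i, (l t - l j) := by
    rw [← hqev (l t), hq0, eval_zero]
  have hsum : ∑ i : Fin n, w i * ∏ j ∈ Finset.univ.erase i, (l t - l j) =
      w t * ∏ j ∈ Finset.univ.erase t, (l t - l j) := by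
    refine Finset.sum_eq_single t (fun i _ hne => ?_) (fun h => absurd (Finset.mem_univ t) h)
    rw [Finset.prod_eq_zero (Finset.mem_erase.2 ⟨Ne.symm hne, Finset.mem_univ t⟩)
      (sub_self (l t)), mul_zero]
  have hprod : (∏ j ∈ Finset.univ.erase t, (l t - l j)) ≠ 0 :=
    Finset.prod_ne_zero_iff.2 fun j hj => sub_ne_zero.2 fun h =>
      (Finset.mem_erase.1 hj).1 (hl h).symm
  have h := he.symm
  rw [hsum] at h
  rcases mul_eq_zero.1 h with h | h
  · exact h
  · exact absurd h hprod

lemma charpoly_diagonal (d : Fin n → ℝ) :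
    (Matrix.diagonal d).charpoly = ∏ i, (X - C (d i)) := by
  classical
  rw [Matrix.charpoly]
  have h : (Matrix.diagonal d).charmatrix = Matrix.diagonal (fun i => X - C (d i)) := by
    ext i j
    by_cases hij : i = j
    · subst hij; simp [Matrix.charmatrix_apply_eq]
    · rw [Matrix.charmatrix_apply_ne _ _ _ hij, Matrix.diagonal_apply_ne _ hij,
        Matrix.diagonal_apply_ne _ hij, map_zero, neg_zero]
  rw [h, Matrix.det_diagonal]

end SIEP

end SIEPAux

/-- Given a simple graph `G` on `n` vertices and `n` distinct real numbers `λ i`, there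
exists an `n × n` real symmetric matrix `A` whose graph is `G` (off-diagonal entry `A i j`
is nonzero iff `i` and `j` are adjacent in `G`) and whose eigenvalues, counted with
multiplicity, are exactly the `λ i` (so its characteristic polynomial is `∏ i (X - λ i)`). -/
theorem finite_lambda_siep {n : ℕ} (G : SimpleGraph (Fin n)) (l : Fin n → ℝ)
    (hl : Function.Injective l) :
    ∃ A : Matrix (Fin n) (Fin n) ℝ, A.IsSymm ∧
      (∀ i j : Fin n, i ≠ j → (A i j ≠ 0 ↔ G.Adj i j)) ∧
      A.charpoly = ∏ i : Fin n, (Polynomial.X - Polynomial.C (l i)) := by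
  classical
  set p₀ : SIEP.P n := (l, 0) with hp₀
  have hFc : ContDiff ℝ 1 (SIEP.F G) := SIEP.contDiff_F G
  have hFd : HasFDerivAt (SIEP.F G) (fderiv ℝ (SIEP.F G) p₀) p₀ :=
    ((hFc.differentiable one_ne_zero) p₀).hasFDerivAt
  set L : SIEP.P n →L[ℝ] SIEP.P n :=
    (fderiv ℝ (SIEP.F G) p₀).prod (ContinuousLinearMap.snd ℝ _ _) with hL
  have hGd : HasFDerivAt (fun p : SIEP.P n => (SIEP.F G p, p.2)) L p₀ :=
    hFd.prodMk hasFDerivAt_snd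
  -- the partial derivative in the diagonal directions
  have hinl : HasFDerivAt (fun d : Fin n → ℝ => ((d, 0) : SIEP.P n))
      (ContinuousLinearMap.inl ℝ (Fin n → ℝ) (Fin n × Fin n → ℝ)) l :=
    hasFDerivAt_prodMk_left l 0
  have hcomp : HasFDerivAt (fun d : Fin n → ℝ => SIEP.F G (d, 0))
      ((fderiv ℝ (SIEP.F G) p₀).comp (ContinuousLinearMap.inl ℝ _ _)) l := by
    have := hFd.comp l hinl
    simpa [Function.comp_def] using this
  have huniq : (fderiv ℝ (SIEP.F G) p₀).comp (ContinuousLinearMap.inl ℝ _ _) = SIEP.D1 n l :=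
    hcomp.unique (SIEP.hasFDerivAt_h G l)
  -- L is bijective
  have hLinj : Function.Injective L := by
    rw [injective_iff_map_eq_zero]
    rintro ⟨zd, ze⟩ hz
    rw [hL] at hz
    have hz1 : fderiv ℝ (SIEP.F G) p₀ (zd, ze) = 0 := congrArg Prod.fst hz
    have hz2 : ze = 0 := congrArg Prod.snd hz
    subst hz2
    have : SIEP.D1 n l zd = 0 := by
      rw [← huniq]; exact hz1
    have := SIEP.D1_inj l hl zd this
    simp [this]
  have hLsurj : Function.Surjective L :=
    LinearMap.injective_iff_surjective.1 hLinj
  let e : SIEP.P n ≃L[ℝ] SIEP.P n :=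
    LinearEquiv.toContinuousLinearEquiv (LinearEquiv.ofBijective
      (L : SIEP.P n →ₗ[ℝ] SIEP.P n) ⟨hLinj, hLsurj⟩)
  have hecoe : (e : SIEP.P n →L[ℝ] SIEP.P n) = L := ContinuousLinearMap.ext fun z => rfl
  have hGc : ContDiff ℝ 1 (fun p : SIEP.P n => (SIEP.F G p, p.2)) := hFc.prodMk contDiff_snd
  have hstrict : HasStrictFDerivAt (fun p : SIEP.P n => (SIEP.F G p, p.2))
      (e : SIEP.P n →L[ℝ] SIEP.P n) p₀ := by
    rw [hecoe]
    exact hGc.contDiffAt.hasStrictFDerivAt' hGd one_ne_zero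
  have hmap := hstrict.map_nhds_eq_of_equiv
  have hrange : Set.range (fun p : SIEP.P n => (SIEP.F G p, p.2)) ∈
      nhds ((SIEP.F G p₀, (0 : Fin n × Fin n → ℝ))) := by
    have h2 : (fun p : SIEP.P n => (SIEP.F G p, p.2)) '' Set.univ ∈
        Filter.map (fun p : SIEP.P n => (SIEP.F G p, p.2)) (nhds p₀) :=
      Filter.image_mem_map Filter.univ_mem
    rw [Set.image_univ] at h2
    show _ ∈ nhds (SIEP.F G p₀, p₀.2)
    rw [← hmap]
    exact h2
  -- choose a small nonzero ε
  have htend : Filter.Tendsto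
      (fun ε : ℝ => ((SIEP.F G p₀, fun _ => ε) : SIEP.P n)) (nhdsWithin 0 {(0:ℝ)}ᶜ)
      (nhds ((SIEP.F G p₀, (0 : Fin n × Fin n → ℝ)))) := by
    refine Filter.Tendsto.mono_left ?_ nhdsWithin_le_nhds
    have hcont : Continuous fun ε : ℝ => ((SIEP.F G p₀, fun _ => ε) : SIEP.P n) := by
      refine continuous_const.prodMk ?_
      exact continuous_pi fun _ => continuous_id
    have := hcont.tendsto 0
    exact this
  have hev : ∀ᶠ ε in nhdsWithin (0:ℝ) {(0:ℝ)}ᶜ,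
      ((SIEP.F G p₀, fun _ => ε) : SIEP.P n) ∈
        Set.range (fun p : SIEP.P n => (SIEP.F G p, p.2)) := htend.eventually_mem hrange
  obtain ⟨ε, hεr, hεne⟩ :=
    (hev.and (eventually_mem_nhdsWithin (a := (0:ℝ)) (s := {(0:ℝ)}ᶜ))).exists
  have hεne' : ε ≠ 0 := hεne
  obtain ⟨p, hp⟩ := hεr
  have hp1 : SIEP.F G p = SIEP.F G p₀ := congrArg Prod.fst hp
  have hp2 : p.2 = fun _ => ε := congrArg Prod.snd hp
  refine ⟨SIEP.matA G p, SIEP.matA_isSymm G p, ?_, ?_⟩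
  · intro i j hij
    rw [SIEP.matA_apply, if_neg hij]
    by_cases hadj : G.Adj i j
    · rw [if_pos hadj, hp2]
      constructor
      · intro _; exact hadj
      · intro _
        show ε + ε ≠ 0
        intro hc
        apply hεne'
        linarith
    · rw [if_neg hadj]
      simp [hadj]
  · -- characteristic polynomial
    have hT : (Matrix.diagonal l).charpoly = ∏ i : Fin n, (X - C (l i)) :=
      SIEP.charpoly_diagonal l
    have hcoeff : ∀ k : Fin n, (SIEP.matA G p).charpoly.coeff k =
        (∏ i : Fin n, (X - C (l i))).coeff k := by
      intro k
      rw [← SIEP.F_coeff, hp1, SIEP.F_coeff, hp₀, SIEP.matA_diag, hT]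
    have hm1 : (SIEP.matA G p).charpoly.Monic := (SIEP.matA G p).charpoly_monic
    have hm2 : (∏ i : Fin n, (X - C (l i))).Monic :=
      monic_prod_of_monic _ _ fun i _ => monic_X_sub_C (l i)
    have hd1 : (SIEP.matA G p).charpoly.natDegree = n := by
      rw [Matrix.charpoly_natDegree_eq_dim, Fintype.card_fin]
    have hd2 : (∏ i : Fin n, (X - C (l i))).natDegree = n := by
      rw [Polynomial.natDegree_prod _ _ fun i _ => X_sub_C_ne_zero (l i)]
      simp [natDegree_X_sub_C]
    ext k
    rcases lt_trichotomy k n with h | h | h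
    · exact hcoeff ⟨k, h⟩
    · have e1 := hm1.coeff_natDegree
      rw [hd1] at e1
      have e2 := hm2.coeff_natDegree
      rw [hd2] at e2
      rw [h, e1, e2]
    · rw [coeff_eq_zero_of_natDegree_lt (by omega : (SIEP.matA G p).charpoly.natDegree < k),
        coeff_eq_zero_of_natDegree_lt (by omega : (∏ i : Fin n, (X - C (l i))).natDegree < k)]
end

section
/- Given a simple graph G on n vertices labeled 1,…,n and a set Λ = {λ₁, λ₂, …, λₙ} of n distinct real numbers, there exists an n×n real symmetric matrix A whose graph is G, whose multiset of eigenvalues is exactly Λ, and which moreover has the Weak Spectral Property. -/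
open Polynomial Matrix Filter Topology

namespace SIEPWSP

variable {n : ℕ}

noncomputable section

lemma eval_charpoly' {m : Type*} [Fintype m] [DecidableEq m] (A : Matrix m m ℝ) (x : ℝ) :
    (A.charpoly).eval x = (x • (1 : Matrix m m ℝ) - A).det := by
  rw [Matrix.charpoly, ← Polynomial.coe_evalRingHom, RingHom.map_det]
  congr 1
  ext i j
  by_cases h : i = j
  · subst h
    simp [Matrix.charmatrix_apply_eq, Matrix.one_apply]
  · simp [Matrix.charmatrix_apply_ne _ _ _ h, Matrix.one_apply, h]

lemma charpoly_diagonal' (d : Fin n → ℝ) :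
    (Matrix.diagonal d).charpoly = ∏ i, (X - C (d i)) := by
  rw [Matrix.charpoly_of_upperTriangular _ (Matrix.blockTriangular_diagonal d)]
  simp

lemma charpoly_conj' (U B V : Matrix (Fin n) (Fin n) ℝ) (hUV : U * V = 1) (hVU : V * U = 1) :
    (U * B * V).charpoly = B.charpoly := by
  have key : charmatrix (U * B * V) = ((C : ℝ →+* ℝ[X]).mapMatrix U) * charmatrix B *
      ((C : ℝ →+* ℝ[X]).mapMatrix V) := by
    rw [charmatrix, charmatrix, _root_.map_mul, _root_.map_mul]
    rw [mul_sub, sub_mul]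
    congr 1
    have hs : (Matrix.scalar (Fin n)) (X : ℝ[X]) = (X : ℝ[X]) • (1 : Matrix (Fin n) (Fin n) ℝ[X]) := by
      ext i j
      by_cases h : i = j <;> simp [Matrix.scalar_apply, Matrix.diagonal_apply, Matrix.one_apply, h]
    rw [hs, mul_assoc, smul_mul_assoc, one_mul, mul_smul_comm,
      ← _root_.map_mul C.mapMatrix U V, hUV]
    simp
  rw [Matrix.charpoly, Matrix.charpoly, key, det_mul, det_mul, mul_right_comm, ← det_mul,
    ← _root_.map_mul C.mapMatrix U V, hUV]
  simp

lemma conj_pow' (U B V : Matrix (Fin n) (Fin n) ℝ) (hUV : U * V = 1) (hVU : V * U = 1) (m : ℕ) :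
    (U * B * V) ^ m = U * B ^ m * V := by
  induction m with
  | zero => simpa using hUV.symm
  | succ m ih =>
      rw [pow_succ, ih, pow_succ]
      calc U * B ^ m * V * (U * B * V) = U * B ^ m * (V * U) * (B * V) := by
            simp only [mul_assoc]
        _ = U * (B ^ m * B) * V := by rw [hVU]; simp only [mul_one, mul_assoc]

lemma aeval_conj' (U B V : Matrix (Fin n) (Fin n) ℝ) (hUV : U * V = 1) (hVU : V * U = 1)
    (p : ℝ[X]) : Polynomial.aeval (U * B * V) p = U * Polynomial.aeval B p * V := by
  rw [Polynomial.aeval_eq_sum_range, Polynomial.aeval_eq_sum_range, Finset.mul_sum,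
    Finset.sum_mul]
  exact Finset.sum_congr rfl fun i _ => by
    rw [mul_smul_comm, smul_mul_assoc, conj_pow' U B V hUV hVU]

lemma aeval_diagonal' (d : Fin n → ℝ) (p : ℝ[X]) :
    Polynomial.aeval (Matrix.diagonal d) p = Matrix.diagonal (fun j => p.eval (d j)) := by
  have h1 : Matrix.diagonal d = Matrix.diagonalAlgHom (n := Fin n) (α := ℝ) ℝ d := rfl
  rw [h1, Polynomial.aeval_algHom_apply]
  have h2 : ∀ j, (Polynomial.aeval d p) j = p.eval (d j) := by
    intro j
    have := (Polynomial.aeval_algHom_apply (Pi.evalAlgHom ℝ (fun _ : Fin n => ℝ) j) d p).symm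
    simpa [Polynomial.coe_aeval_eq_eval] using this
  simp only [Matrix.diagonalAlgHom_apply]
  rw [show (Polynomial.aeval d p) = (fun j => p.eval (d j)) from funext h2]












/-- the W matrix: entries are diagonal entries of spectral projections. -/
def Wmat (l : Fin n → ℝ) (A : Matrix (Fin n) (Fin n) ℝ) : Matrix (Fin n) (Fin n) ℝ :=
  Matrix.of fun k i => (Polynomial.aeval A (Lagrange.basis Finset.univ l i)) k k

lemma Wmat_diagonal (l : Fin n → ℝ) (hl : Function.Injective l) :
    Wmat l (Matrix.diagonal l) = 1 := by
  ext k i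
  rw [Wmat, Matrix.of_apply, aeval_diagonal', Matrix.diagonal_apply_eq, Matrix.one_apply]
  by_cases h : k = i
  · subst h
    simp [Lagrange.eval_basis_self hl.injOn (Finset.mem_univ k)]
  · rw [Lagrange.eval_basis_of_ne (Ne.symm h) (Finset.mem_univ k), if_neg h]

lemma continuous_Wmat (l : Fin n → ℝ) :
    Continuous fun A : Matrix (Fin n) (Fin n) ℝ => Wmat l A := by
  have hrw : (fun A : Matrix (Fin n) (Fin n) ℝ => Wmat l A) = fun A =>
      Matrix.of fun k i => ∑ m ∈ Finset.range
        ((Lagrange.basis Finset.univ l i).natDegree + 1),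
        (Lagrange.basis Finset.univ l i).coeff m * (A ^ m) k k := by
    funext A
    ext k i
    rw [Wmat, Matrix.of_apply, Polynomial.aeval_eq_sum_range, Matrix.of_apply,
      Matrix.sum_apply]
    exact Finset.sum_congr rfl fun m _ => by simp [Matrix.smul_apply]
  rw [hrw]
  refine continuous_matrix fun k i => ?_
  simp only [Matrix.of_apply]
  refine continuous_finset_sum _ fun m _ => Continuous.mul continuous_const ?_
  exact ((continuous_apply (A := fun _ : Fin n => ℝ) k).comp
    ((continuous_apply (A := fun _ : Fin n => Fin n → ℝ) k).comp
      (continuous_pow (M := Matrix (Fin n) (Fin n) ℝ) m)))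

lemma hasWSP_of_wmat (A : Matrix (Fin n) (Fin n) ℝ) (hA : A.IsSymm)
    (l : Fin n → ℝ) (hl : Function.Injective l)
    (hchar : A.charpoly = ∏ i, (X - C (l i)))
    (hW : IsUnit (Wmat l A)) : HasWSP A := by
  classical
  have hH : A.IsHermitian := by
    rw [Matrix.IsHermitian]
    ext i j
    rw [Matrix.conjTranspose_apply, star_trivial]
    exact (congrFun (congrFun hA i) j : Aᵀ i j = A i j) ▸ rfl
  set U : Matrix (Fin n) (Fin n) ℝ := (hH.eigenvectorUnitary : Matrix (Fin n) (Fin n) ℝ) with hUdef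
  set μ : Fin n → ℝ := hH.eigenvalues with hμdef
  have hU1 : U * star U = 1 := Matrix.mem_unitaryGroup_iff.mp (hH.eigenvectorUnitary).2
  have hU2 : star U * U = 1 := Matrix.mem_unitaryGroup_iff'.mp (hH.eigenvectorUnitary).2
  have hAspec : A = U * Matrix.diagonal μ * star U := by
    have := hH.spectral_theorem
    simpa using this
  -- charpoly of A equals that of diagonal μ
  have hcharμ : A.charpoly = ∏ i, (X - C (μ i)) := by
    rw [hAspec, charpoly_conj' U _ (star U) hU1 hU2, charpoly_diagonal']
  have hprodeq : (∏ i, (X - C (μ i))) = ∏ i, (X - C (l i)) := hcharμ ▸ hchar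
  have hms : Multiset.map μ Finset.univ.val = Multiset.map l Finset.univ.val := by
    have h1 : ((Multiset.map μ Finset.univ.val).map fun a => X - C a).prod
        = ((Multiset.map l Finset.univ.val).map fun a => X - C a).prod := by
      rw [Multiset.map_map, Multiset.map_map, ← Finset.prod_eq_multiset_prod,
        ← Finset.prod_eq_multiset_prod]
      simpa [Function.comp] using hprodeq
    have := congrArg Polynomial.roots h1
    rwa [Polynomial.roots_multiset_prod_X_sub_C, Polynomial.roots_multiset_prod_X_sub_C] at this
  have hμinj : Function.Injective μ := by
    have hnd : (Multiset.map μ Finset.univ.val).Nodup := by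
      rw [hms]; exact Multiset.Nodup.map hl Finset.univ.nodup
    intro a b hab
    exact Multiset.inj_on_of_nodup_map hnd a (Finset.mem_univ a) b (Finset.mem_univ b) hab
  have hex : ∀ j, ∃ i, l i = μ j := by
    intro j
    have : μ j ∈ Multiset.map l Finset.univ.val := by
      rw [← hms]; exact Multiset.mem_map_of_mem μ (Finset.mem_univ j)
    obtain ⟨i, _, hi⟩ := Multiset.mem_map.mp this
    exact ⟨i, hi⟩
  choose g hg using hex
  have hginj : Function.Injective g := fun a b hab => hμinj (by rw [← hg a, ← hg b, hab])
  let e : Fin n ≃ Fin n := Equiv.ofBijective g (Finite.injective_iff_bijective.mp hginj)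
  have he : ∀ j, l (e j) = μ j := hg
  -- main argument
  intro Xm _ hXdiag hcomm
  set D : Matrix (Fin n) (Fin n) ℝ := Matrix.diagonal μ with hDdef
  have hmid : ∀ M N : Matrix (Fin n) (Fin n) ℝ, M * U * (star U * N) = M * N := by
    intro M N
    rw [mul_assoc, ← mul_assoc U, hU1, one_mul]
  have hDA : D = star U * A * U := by
    rw [hAspec, show star U * (U * D * star U) * U = (star U * U) * D * (star U * U) by
      simp only [mul_assoc], hU2, one_mul, mul_one]
  set Y : Matrix (Fin n) (Fin n) ℝ := star U * Xm * U with hYdef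
  have hYD : Y * D = D * Y := by
    have h1 : Y * D = star U * (Xm * A) * U := by
      rw [hYdef, hDA, show star U * Xm * U * (star U * A * U)
          = (star U * Xm) * (U * (star U * (A * U))) by simp only [mul_assoc],
        ← mul_assoc U, hU1, one_mul]
      simp only [mul_assoc]
    have h2 : D * Y = star U * (A * Xm) * U := by
      rw [hYdef, hDA, show star U * A * U * (star U * Xm * U)
          = (star U * A) * (U * (star U * (Xm * U))) by simp only [mul_assoc],
        ← mul_assoc U, hU1, one_mul]
      simp only [mul_assoc]
    rw [h1, h2, hcomm]
  have hYoff : ∀ i j, i ≠ j → Y i j = 0 := by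
    intro i j hij
    have h1 : (Y * D) i j = Y i j * μ j := Matrix.mul_diagonal _ _ _ _
    have h2 : (D * Y) i j = μ i * Y i j := Matrix.diagonal_mul _ _ _ _
    have h3 : Y i j * μ j = μ i * Y i j := by rw [← h1, ← h2, hYD]
    have h4 : Y i j * (μ j - μ i) = 0 := by ring_nf; linarith [h3]
    rcases mul_eq_zero.mp h4 with h | h
    · exact h
    · exact absurd (sub_eq_zero.mp h) fun hh => hij (hμinj hh).symm
  set ν : Fin n → ℝ := fun j => Y j j with hνdef
  have hY : Y = Matrix.diagonal ν := by
    ext i j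
    by_cases h : i = j
    · subst h; rw [Matrix.diagonal_apply_eq]
    · rw [Matrix.diagonal_apply_ne _ h]; exact hYoff i j h
  have hX : Xm = U * Y * star U := by
    rw [hYdef, show U * (star U * Xm * U) * star U = (U * star U) * Xm * (U * star U) by
      simp only [mul_assoc], hU1, one_mul, mul_one]
  have hXkk : ∀ k, Xm k k = ∑ j, ν j * (U k j) ^ 2 := by
    intro k
    rw [hX, hY, Matrix.mul_apply]
    refine Finset.sum_congr rfl fun j _ => ?_
    rw [Matrix.mul_diagonal, Matrix.star_apply, star_trivial]
    ring
  have hWE : ∀ k i, Wmat l A k i = (U k (e.symm i)) ^ 2 := by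
    intro k i
    have haev : Polynomial.aeval A (Lagrange.basis Finset.univ l i)
        = U * Matrix.diagonal (fun j => (Lagrange.basis Finset.univ l i).eval (μ j)) * star U := by
      rw [hAspec, aeval_conj' U _ (star U) hU1 hU2, aeval_diagonal']
    have hev : ∀ j, (Lagrange.basis Finset.univ l i).eval (μ j)
        = if j = e.symm i then 1 else 0 := by
      intro j
      rw [← he j]
      by_cases h : e j = i
      · rw [h, Lagrange.eval_basis_self hl.injOn (Finset.mem_univ i),
          if_pos (by rw [← h, Equiv.symm_apply_apply])]
      · rw [Lagrange.eval_basis_of_ne (fun hh => h hh.symm) (Finset.mem_univ (e j)),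
          if_neg (fun hh => h (by rw [hh, Equiv.apply_symm_apply]))]
    rw [Wmat, Matrix.of_apply, haev, Matrix.mul_apply]
    rw [Finset.sum_eq_single (e.symm i)]
    · rw [Matrix.mul_diagonal, hev, if_pos rfl, Matrix.star_apply, star_trivial]; ring
    · intro j _ hj
      rw [Matrix.mul_diagonal, hev, if_neg hj]; ring
    · intro h; exact absurd (Finset.mem_univ _) h
  have hvec : (Wmat l A) *ᵥ (fun i => ν (e.symm i)) = 0 := by
    funext k
    rw [Matrix.mulVec, dotProduct]
    have : ∑ i, Wmat l A k i * ν (e.symm i) = ∑ j, ν j * (U k j) ^ 2 := by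
      rw [← Equiv.sum_comp e.symm (fun j => ν j * (U k j) ^ 2)]
      refine Finset.sum_congr rfl fun i _ => ?_
      rw [hWE]
      ring
    rw [this, ← hXkk k, hXdiag k]
    rfl
  have hinj := Matrix.mulVec_injective_iff_isUnit.mpr hW
  have hν0 : (fun i => ν (e.symm i)) = (0 : Fin n → ℝ) := by
    apply hinj
    rw [hvec, Matrix.mulVec_zero]
  have hν : ν = 0 := by
    funext j
    have := congrFun hν0 (e j)
    rwa [Equiv.symm_apply_apply] at this
  rw [hX, hY, hν]
  have hz : Matrix.diagonal (0 : Fin n → ℝ) = 0 := Matrix.diagonal_zero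
  rw [hz, mul_zero, zero_mul]


/-- derivative of a single entry of `l k • 1 - (diagonal d + t • S)` -/
def entryD (S : Matrix (Fin n) (Fin n) ℝ) (a b : Fin n) : (ℝ × (Fin n → ℝ)) →L[ℝ] ℝ :=
  (if a = b then
    -((ContinuousLinearMap.proj b).comp (ContinuousLinearMap.snd ℝ ℝ (Fin n → ℝ))) else 0)
    - (S a b) • (ContinuousLinearMap.fst ℝ ℝ (Fin n → ℝ))

lemma entryD_apply (S : Matrix (Fin n) (Fin n) ℝ) (a b : Fin n) (p : ℝ × (Fin n → ℝ)) :
    entryD S a b p = (if a = b then -(p.2 b) else 0) - S a b * p.1 := by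
  by_cases h : a = b <;>
    simp [entryD, h]

lemma hasStrict_entry (l : Fin n → ℝ) (S : Matrix (Fin n) (Fin n) ℝ) (k a b : Fin n)
    (q : ℝ × (Fin n → ℝ)) :
    HasStrictFDerivAt (fun p : ℝ × (Fin n → ℝ) =>
      (l k • (1 : Matrix (Fin n) (Fin n) ℝ) - (Matrix.diagonal p.2 + p.1 • S)) a b)
      (entryD S a b) q := by
  have hfn : (fun p : ℝ × (Fin n → ℝ) =>
      (l k • (1 : Matrix (Fin n) (Fin n) ℝ) - (Matrix.diagonal p.2 + p.1 • S)) a b)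
      = fun p => (l k * (1 : Matrix (Fin n) (Fin n) ℝ) a b) + entryD S a b p := by
    funext p
    rw [entryD_apply]
    by_cases h : a = b
    · subst h
      simp [Matrix.sub_apply, Matrix.add_apply, Matrix.smul_apply, Matrix.one_apply]
      ring
    · simp [Matrix.sub_apply, Matrix.add_apply, Matrix.smul_apply, Matrix.one_apply, h,
        Matrix.diagonal_apply_ne _ h]
      ring
  rw [hfn]
  exact ((entryD S a b).hasStrictFDerivAt).const_add _

/-- derivative of the `k`-th determinant component. -/
def detD (l : Fin n → ℝ) (S : Matrix (Fin n) (Fin n) ℝ) (k : Fin n) :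
    (ℝ × (Fin n → ℝ)) →L[ℝ] ℝ :=
  ∑ σ : Equiv.Perm (Fin n), ((Equiv.Perm.sign σ : ℤ) : ℝ) •
    ∑ i, (∏ j ∈ Finset.univ.erase i,
      (l k • (1 : Matrix (Fin n) (Fin n) ℝ) - (Matrix.diagonal l + (0:ℝ) • S)) (σ j) j) •
        entryD S (σ i) i

lemma matrix_at_pt (l : Fin n → ℝ) (S : Matrix (Fin n) (Fin n) ℝ) (k : Fin n) :
    l k • (1 : Matrix (Fin n) (Fin n) ℝ) - (Matrix.diagonal l + (0:ℝ) • S)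
      = Matrix.diagonal (fun i' => l k - l i') := by
  ext i j
  by_cases h : i = j
  · subst h; simp [Matrix.one_apply, Matrix.diagonal_apply_eq]
  · simp [Matrix.one_apply, h, Matrix.diagonal_apply_ne _ h]

lemma hasStrict_det (l : Fin n → ℝ) (S : Matrix (Fin n) (Fin n) ℝ) (k : Fin n) :
    HasStrictFDerivAt (fun p : ℝ × (Fin n → ℝ) =>
      (l k • (1 : Matrix (Fin n) (Fin n) ℝ) - (Matrix.diagonal p.2 + p.1 • S)).det)
      (detD l S k) ((0:ℝ), l) := by
  have hfn : (fun p : ℝ × (Fin n → ℝ) =>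
      (l k • (1 : Matrix (Fin n) (Fin n) ℝ) - (Matrix.diagonal p.2 + p.1 • S)).det)
      = fun p => ∑ σ : Equiv.Perm (Fin n), ((Equiv.Perm.sign σ : ℤ) : ℝ) *
          ∏ i, (l k • (1 : Matrix (Fin n) (Fin n) ℝ) - (Matrix.diagonal p.2 + p.1 • S)) (σ i) i := by
    funext p
    rw [Matrix.det_apply']
  rw [hfn, detD]
  refine HasStrictFDerivAt.fun_sum fun σ _ => ?_
  have hprod := HasStrictFDerivAt.finset_prod (u := Finset.univ)
    (g := fun i (p : ℝ × (Fin n → ℝ)) =>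
      (l k • (1 : Matrix (Fin n) (Fin n) ℝ) - (Matrix.diagonal p.2 + p.1 • S)) (σ i) i)
    (g' := fun i => entryD S (σ i) i) (x := ((0:ℝ), l))
    (fun i _ => hasStrict_entry l S k (σ i) i _)
  exact hprod.const_mul (((Equiv.Perm.sign σ : ℤ) : ℝ))

lemma detD_apply (l : Fin n → ℝ) (S : Matrix (Fin n) (Fin n) ℝ) (hS : ∀ i, S i i = 0)
    (k : Fin n) (s : ℝ) (v : Fin n → ℝ) :
    detD l S k (s, v) = -((∏ j ∈ Finset.univ.erase k, (l k - l j)) * v k) := by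
  rw [detD]
  simp only [matrix_at_pt l S k]
  rw [ContinuousLinearMap.sum_apply]
  rw [Finset.sum_eq_single_of_mem (1 : Equiv.Perm (Fin n)) (Finset.mem_univ _)]
  · rw [ContinuousLinearMap.smul_apply, ContinuousLinearMap.sum_apply]
    rw [Finset.sum_eq_single_of_mem k (Finset.mem_univ _)]
    · rw [ContinuousLinearMap.smul_apply, entryD_apply]
      simp only [Equiv.Perm.one_apply, Matrix.diagonal_apply_eq, hS k, if_pos rfl]
      simp only [smul_eq_mul, zero_mul, sub_zero, Equiv.Perm.sign_one, if_true,
        Units.val_one, Int.cast_one]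
      ring
    · intro i _ hik
      rw [ContinuousLinearMap.smul_apply]
      have : (∏ j ∈ Finset.univ.erase i,
          (Matrix.diagonal (fun i' => l k - l i') : Matrix (Fin n) (Fin n) ℝ)
            ((1 : Equiv.Perm (Fin n)) j) j) = 0 := by
        refine Finset.prod_eq_zero (Finset.mem_erase.mpr ⟨fun h => hik h.symm, Finset.mem_univ k⟩) ?_
        simp [Matrix.diagonal_apply_eq]
      rw [this, zero_smul]
  · intro σ _ hσ1
    have hex : ∃ x, σ x ≠ x := by
      by_contra h
      push_neg at h
      exact hσ1 (Equiv.ext h)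
    obtain ⟨x, hx⟩ := hex
    have hinner : ∀ i, (∏ j ∈ Finset.univ.erase i,
        (Matrix.diagonal (fun i' => l k - l i') : Matrix (Fin n) (Fin n) ℝ) (σ j) j) = 0 := by
      intro i
      by_cases hxi : x = i
      · subst hxi
        have hy : σ (σ x) ≠ σ x := fun h => hx (σ.injective h)
        have hyx : σ x ≠ x := hx
        refine Finset.prod_eq_zero (Finset.mem_erase.mpr ⟨hyx, Finset.mem_univ _⟩) ?_
        exact Matrix.diagonal_apply_ne _ hy
      · refine Finset.prod_eq_zero (Finset.mem_erase.mpr ⟨hxi, Finset.mem_univ _⟩) ?_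
        exact Matrix.diagonal_apply_ne _ hx
    rw [ContinuousLinearMap.smul_apply, ContinuousLinearMap.sum_apply]
    rw [Finset.sum_eq_zero fun i _ => by rw [ContinuousLinearMap.smul_apply, hinner i, zero_smul]]
    simp

/-- full derivative -/
def FD (l : Fin n → ℝ) (S : Matrix (Fin n) (Fin n) ℝ) :
    (ℝ × (Fin n → ℝ)) →L[ℝ] (ℝ × (Fin n → ℝ)) :=
  (ContinuousLinearMap.fst ℝ ℝ (Fin n → ℝ)).prod
    (ContinuousLinearMap.pi fun k => detD l S k)

lemma exists_good_matrix (G : SimpleGraph (Fin n)) [DecidableRel G.Adj] (l : Fin n → ℝ)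
    (hl : Function.Injective l) :
    ∃ A : Matrix (Fin n) (Fin n) ℝ, A.IsSymm ∧
      (∀ i j, i ≠ j → (A i j ≠ 0 ↔ G.Adj i j)) ∧
      A.charpoly = ∏ i, (X - C (l i)) ∧ IsUnit (Wmat l A) := by
  classical
  set S : Matrix (Fin n) (Fin n) ℝ := Matrix.of fun i j => if G.Adj i j then (1:ℝ) else 0 with hSdef
  have hSdiag : ∀ i, S i i = 0 := fun i => by simp [hSdef]
  have hSsymm : S.IsSymm := by
    ext i j
    simp only [hSdef, Matrix.transpose_apply, Matrix.of_apply]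
    by_cases h : G.Adj i j
    · simp [h, h.symm]
    · have h' : ¬ G.Adj j i := fun hh => h hh.symm
      simp [h, h']
  set Ffun : ℝ × (Fin n → ℝ) → ℝ × (Fin n → ℝ) := fun p => (p.1, fun k =>
    (l k • (1 : Matrix (Fin n) (Fin n) ℝ) - (Matrix.diagonal p.2 + p.1 • S)).det) with hFdef
  set pt : ℝ × (Fin n → ℝ) := ((0:ℝ), l) with hptdef
  -- strict derivative of Ffun
  have hFstrict : HasStrictFDerivAt Ffun (FD l S) pt := by
    refine HasStrictFDerivAt.prodMk ?_ ?_
    · exact hasStrictFDerivAt_fst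
    · exact hasStrictFDerivAt_pi.mpr fun k => hasStrict_det l S k
  -- ck nonzero
  have hck : ∀ k, (∏ j ∈ Finset.univ.erase k, (l k - l j)) ≠ 0 := by
    intro k
    refine Finset.prod_ne_zero_iff.mpr fun j hj => ?_
    have hjk : j ≠ k := (Finset.mem_erase.mp hj).1
    exact sub_ne_zero.mpr fun h => hjk (hl h.symm)
  -- injectivity of FD
  have hinj : Function.Injective (FD l S) := by
    intro p q hpq
    obtain ⟨s₁, v₁⟩ := p
    obtain ⟨s₂, v₂⟩ := q
    have h1 : s₁ = s₂ := congrArg Prod.fst hpq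
    have h2 : ∀ k, detD l S k (s₁, v₁) = detD l S k (s₂, v₂) := by
      intro k
      have := congrArg Prod.snd hpq
      exact congrFun this k
    have h3 : ∀ k, v₁ k = v₂ k := by
      intro k
      have := h2 k
      rw [detD_apply l S hSdiag, detD_apply l S hSdiag] at this
      have := neg_injective this
      exact mul_left_cancel₀ (hck k) this
    exact Prod.ext h1 (funext h3)
  have hsurj : Function.Surjective (FD l S) := by
    have := (LinearMap.injective_iff_surjective_of_finrank_eq_finrank
      (f := ((FD l S) : (ℝ × (Fin n → ℝ)) →ₗ[ℝ] (ℝ × (Fin n → ℝ)))) rfl).mp hinj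
    exact this
  let Leq : (ℝ × (Fin n → ℝ)) ≃L[ℝ] (ℝ × (Fin n → ℝ)) :=
    (LinearEquiv.ofBijective ((FD l S) : (ℝ × (Fin n → ℝ)) →ₗ[ℝ] (ℝ × (Fin n → ℝ)))
      ⟨hinj, hsurj⟩).toContinuousLinearEquiv
  have hLeq : (Leq : (ℝ × (Fin n → ℝ)) →L[ℝ] (ℝ × (Fin n → ℝ))) = FD l S :=
    ContinuousLinearMap.ext fun p => rfl
  have hFd : HasStrictFDerivAt Ffun (Leq : (ℝ × (Fin n → ℝ)) →L[ℝ] (ℝ × (Fin n → ℝ))) pt := by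
    rw [hLeq]; exact hFstrict
  -- value at the base point
  have hFpt : Ffun pt = ((0:ℝ), (0 : Fin n → ℝ)) := by
    refine Prod.ext rfl ?_
    funext k
    show (l k • (1 : Matrix (Fin n) (Fin n) ℝ) - (Matrix.diagonal l + (0:ℝ) • S)).det = 0
    rw [matrix_at_pt l S k, Matrix.det_diagonal]
    exact Finset.prod_eq_zero (Finset.mem_univ k) (sub_self _)
  -- local inverse
  set ψ : (ℝ × (Fin n → ℝ)) → (ℝ × (Fin n → ℝ)) := hFd.localInverse Ffun _ pt with hψdef
  have hr : ∀ᶠ y in 𝓝 (Ffun pt), Ffun (ψ y) = y := hFd.eventually_right_inverse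
  have hcont : ContinuousAt ψ (Ffun pt) := hFd.localInverse_continuousAt
  have hψpt : ψ (Ffun pt) = pt := hFd.localInverse_apply_image
  -- the curve
  set ycurve : ℝ → ℝ × (Fin n → ℝ) := fun t => (t, (0 : Fin n → ℝ)) with hydef
  have hy : Tendsto ycurve (𝓝 0) (𝓝 (Ffun pt)) := by
    rw [hFpt]
    exact (continuous_id.prodMk continuous_const).tendsto 0
  have hev1 : ∀ᶠ t in 𝓝 (0:ℝ), Ffun (ψ (ycurve t)) = ycurve t := hy.eventually hr
  -- continuity of t ↦ matrix
  have hψy : Tendsto (fun t => ψ (ycurve t)) (𝓝 0) (𝓝 pt) := by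
    have := hcont.tendsto.comp hy
    rwa [hψpt] at this
  set Amat : ℝ → Matrix (Fin n) (Fin n) ℝ :=
    fun t => Matrix.diagonal ((ψ (ycurve t)).2) + t • S with hAdef
  have hAm : Tendsto Amat (𝓝 0) (𝓝 (Matrix.diagonal l)) := by
    have hdiagcont : Continuous fun d : Fin n → ℝ => Matrix.diagonal d := by
      refine continuous_matrix fun i j => ?_
      by_cases h : i = j
      · subst h; simpa [Matrix.diagonal_apply_eq] using continuous_apply i
      · simpa [Matrix.diagonal_apply_ne _ h] using continuous_const
    have h1 : Tendsto (fun t => Matrix.diagonal ((ψ (ycurve t)).2)) (𝓝 0)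
        (𝓝 (Matrix.diagonal l)) := by
      have hsnd : Tendsto (fun t => (ψ (ycurve t)).2) (𝓝 0) (𝓝 l) :=
        (continuous_snd.tendsto pt).comp hψy
      exact (hdiagcont.tendsto l).comp hsnd
    have h2 : Tendsto (fun t : ℝ => t • S) (𝓝 0) (𝓝 ((0:ℝ) • S)) :=
      ((continuous_id.smul continuous_const).tendsto 0)
    have := h1.add h2
    rwa [zero_smul, add_zero] at this
  have hdetW : Tendsto (fun t => (Wmat l (Amat t)).det) (𝓝 0) (𝓝 (1:ℝ)) := by
    have hcontdet : Continuous fun A : Matrix (Fin n) (Fin n) ℝ => (Wmat l A).det :=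
      (continuous_Wmat l).matrix_det
    have := (hcontdet.tendsto (Matrix.diagonal l)).comp hAm
    rwa [Wmat_diagonal l hl, Matrix.det_one] at this
  have hev2 : ∀ᶠ t in 𝓝 (0:ℝ), (Wmat l (Amat t)).det ≠ 0 :=
    hdetW.eventually (eventually_ne_nhds one_ne_zero)
  -- pick t ≠ 0
  have hev : ∀ᶠ t in 𝓝[≠] (0:ℝ),
      (Ffun (ψ (ycurve t)) = ycurve t ∧ (Wmat l (Amat t)).det ≠ 0) ∧ t ≠ 0 := by
    refine Filter.Eventually.and (((hev1.and hev2).filter_mono nhdsWithin_le_nhds)) ?_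
    exact eventually_mem_nhdsWithin
  obtain ⟨t, ⟨hFt, hWt⟩, ht0⟩ := hev.exists
  -- the matrix
  refine ⟨Amat t, ?_, ?_, ?_, ?_⟩
  · -- symmetric
    rw [Matrix.IsSymm, hAdef]
    simp only [Matrix.transpose_add, Matrix.transpose_smul, Matrix.diagonal_transpose]
    rw [hSsymm]
  · -- graph
    intro i j hij
    have : Amat t i j = t * S i j := by
      rw [hAdef]
      simp [Matrix.add_apply, Matrix.diagonal_apply_ne _ hij, Matrix.smul_apply]
    rw [this, hSdef]
    by_cases h : G.Adj i j
    · simp [h, ht0]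
    · simp [h]
  · -- charpoly
    have hq1 : (ψ (ycurve t)).1 = t := congrArg Prod.fst hFt
    have hdet0 : ∀ k, ((l k) • (1 : Matrix (Fin n) (Fin n) ℝ) - Amat t).det = 0 := by
      intro k
      have h2 := congrFun (congrArg Prod.snd hFt) k
      simp only [hFdef] at h2
      rw [hq1] at h2
      exact h2
    have heval : ∀ k, ((Amat t).charpoly - ∏ i, (X - C (l i))).eval (l k) = 0 := by
      intro k
      rw [Polynomial.eval_sub, eval_charpoly', hdet0 k, Polynomial.eval_prod]
      rw [Finset.prod_eq_zero (Finset.mem_univ k) (by simp)]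
      ring
    by_cases hPQ : (Amat t).charpoly = ∏ i, (X - C (l i))
    · exact hPQ
    exfalso
    have hmonic1 : ((Amat t).charpoly).Monic := Matrix.charpoly_monic _
    have hmonic2 : (∏ i : Fin n, (X - C (l i))).Monic :=
      monic_prod_of_monic _ _ fun i _ => monic_X_sub_C (l i)
    have hdeg : ((Amat t).charpoly).degree = (∏ i : Fin n, (X - C (l i))).degree := by
      rw [Matrix.charpoly_degree_eq_dim, Polynomial.degree_prod]
      simp [Polynomial.degree_X_sub_C]
    have hP0 : (Amat t).charpoly - ∏ i, (X - C (l i)) ≠ 0 := sub_ne_zero.mpr hPQ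
    have hlt : ((Amat t).charpoly - ∏ i, (X - C (l i))).degree < ((Amat t).charpoly).degree :=
      Polynomial.degree_sub_lt hdeg hmonic1.ne_zero (by rw [hmonic1.leadingCoeff, hmonic2.leadingCoeff])
    have hltn : ((Amat t).charpoly - ∏ i, (X - C (l i))).natDegree < Fintype.card (Fin n) := by
      have hdd : ((Amat t).charpoly).degree = (Fintype.card (Fin n) : ℕ) :=
        Matrix.charpoly_degree_eq_dim _
      rw [Polynomial.natDegree_lt_iff_degree_lt hP0]
      rw [hdd] at hlt
      exact_mod_cast hlt
    exact hP0 (Polynomial.eq_zero_of_natDegree_lt_card_of_eval_eq_zero _ hl heval hltn)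
  · -- W invertible
    exact (Matrix.isUnit_iff_isUnit_det _).mpr (isUnit_iff_ne_zero.mpr hWt)

end

end SIEPWSP

/-- Given a simple graph `G` on `n` vertices and `n` distinct real numbers `λ i`, there
exists an `n × n` real symmetric matrix `A` whose graph is `G`, whose eigenvalues counted
with multiplicity are exactly the `λ i`, and which moreover has the WSP. -/
theorem finite_lambda_siep_wsp {n : ℕ} (G : SimpleGraph (Fin n)) (l : Fin n → ℝ)
    (hl : Function.Injective l) :
    ∃ A : Matrix (Fin n) (Fin n) ℝ, A.IsSymm ∧
      (∀ i j : Fin n, i ≠ j → (A i j ≠ 0 ↔ G.Adj i j)) ∧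
      A.charpoly = ∏ i : Fin n, (Polynomial.X - Polynomial.C (l i)) ∧
      HasWSP A := by
  classical
  obtain ⟨A, hsym, hgraph, hchar, hW⟩ := SIEPWSP.exists_good_matrix G l hl
  exact ⟨A, hsym, hgraph, hchar, SIEPWSP.hasWSP_of_wmat A hsym l hl hchar hW⟩
end

section
/- Let A be an n×n real symmetric matrix that has the Weak Spectral Property and has n distinct eigenvalues. Then the n×n real matrix J whose (k,i)-entry is the i-th diagonal entry of A^{k−1} (for k, i ∈ {1,…,n}, with A⁰ = I) is nonsingular. Equivalently, the only real polynomial p of degree at most n−1 such that all diagonal entries of p(A) vanish is the zero polynomial. -/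
open Polynomial

lemma eval_charpoly_aux {n : ℕ} (A : Matrix (Fin n) (Fin n) ℝ) (μ : ℝ) :
    (A.charpoly).eval μ = (μ • (1 : Matrix (Fin n) (Fin n) ℝ) - A).det := by
  rw [Matrix.charpoly, _root_.eval_det, Matrix.matPolyEquiv_charmatrix]
  congr 1
  simp only [Polynomial.eval_sub, Polynomial.eval_X, Polynomial.eval_C]
  congr 1
  simp [Matrix.scalar, Algebra.algebraMap_eq_smul_one]

/-- each root of the (split, distinct roots) charpoly is a root of the minimal polynomial. -/
lemma root_minpoly_of_eigen {n : ℕ} (A : Matrix (Fin n) (Fin n) ℝ) (μ : ℝ)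
    (h : (A.charpoly).eval μ = 0) : (minpoly ℝ A).IsRoot μ := by
  rw [eval_charpoly_aux] at h
  obtain ⟨v, hv0, hv⟩ := Matrix.exists_mulVec_eq_zero_iff.mpr h
  have hAv : A.mulVec v = μ • v := by
    have := hv
    rw [Matrix.sub_mulVec, sub_eq_zero] at this
    simpa [Matrix.smul_mulVec, Matrix.one_mulVec] using this.symm
  rw [← Matrix.minpoly_toLin' A]
  apply Module.End.isRoot_of_hasEigenvalue
  apply Module.End.hasEigenvalue_of_hasEigenvector (x := v)
  refine ⟨?_, hv0⟩
  rw [Module.End.mem_eigenspace_iff, Matrix.toLin'_apply, hAv]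

/-- If an `n × n` real symmetric matrix `A` has the WSP and has `n` distinct eigenvalues,
then the `n × n` matrix `J` whose `(k, i)` entry is the `i`-th diagonal entry of `A ^ k`
(rows indexed by `k = 0, 1, …, n - 1`) is nonsingular. -/
theorem jacobian_nonsingular {n : ℕ} (A : Matrix (Fin n) (Fin n) ℝ) (hA : A.IsSymm)
    (hW : HasWSP A)
    (hdist : ∃ l : Fin n → ℝ, Function.Injective l ∧
      A.charpoly = ∏ i : Fin n, (Polynomial.X - Polynomial.C (l i))) :
    (Matrix.of fun k i : Fin n => (A ^ (k : ℕ)) i i).det ≠ 0 := by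
  intro hdet
  obtain ⟨l, hl, hcp⟩ := hdist
  obtain ⟨c, hc0, hc⟩ := Matrix.exists_vecMul_eq_zero_iff.mpr hdet
  -- the matrix X = ∑ c k • A^k
  set X : Matrix (Fin n) (Fin n) ℝ := ∑ k : Fin n, c k • A ^ (k : ℕ) with hX
  have hXsymm : X.IsSymm := by
    unfold Matrix.IsSymm
    rw [hX, Matrix.transpose_sum]
    refine Finset.sum_congr rfl fun k _ => ?_
    rw [Matrix.transpose_smul, Matrix.transpose_pow, hA]
  have hXdiag : ∀ i, X i i = 0 := by
    intro i
    have := congrFun hc i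
    simpa [hX, Matrix.sum_apply, Matrix.vecMul, dotProduct, mul_comm] using this
  have hXcomm : X * A = A * X := by
    rw [hX, Finset.sum_mul, Finset.mul_sum]
    refine Finset.sum_congr rfl fun k _ => ?_
    rw [Matrix.smul_mul, Matrix.mul_smul, ← pow_succ, ← pow_succ']
  have hX0 : X = 0 := hW X hXsymm hXdiag hXcomm
  -- the polynomial p = ∑ monomial k (c k)
  set p : ℝ[X] := ∑ k : Fin n, Polynomial.monomial (k : ℕ) (c k) with hp
  have hpne : p ≠ 0 := by
    intro h
    apply hc0
    funext k
    have := congrArg (fun q => Polynomial.coeff q (k : ℕ)) h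
    simpa [hp, Polynomial.coeff_monomial, Fin.val_eq_val] using this
  have haev : Polynomial.aeval A p = 0 := by
    rw [hp, map_sum, ← hX0, hX]
    refine Finset.sum_congr rfl fun k _ => ?_
    simp [Polynomial.aeval_monomial, Algebra.smul_def]
  have hmin : minpoly ℝ A ∣ p := minpoly.dvd ℝ A haev
  -- degree bounds
  have hpdeg : p.natDegree < n := by
    have hn : 0 < n := by
      rcases Nat.eq_zero_or_pos n with h | h
      · exfalso; apply hc0; funext k; exact absurd k.2 (by omega)
      · exact h
    have hdlt : p.degree < (n : ℕ) := by
      apply lt_of_le_of_lt (Polynomial.degree_sum_le _ _)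
      rw [Finset.sup_lt_iff (by exact_mod_cast WithBot.bot_lt_coe n)]
      intro k _
      exact lt_of_le_of_lt (Polynomial.degree_monomial_le _ _) (by exact_mod_cast k.2)
    exact (Polynomial.natDegree_lt_iff_degree_lt hpne).mpr hdlt
  -- minpoly has all the l i as roots, so natDegree ≥ n
  have hmne : minpoly ℝ A ≠ 0 := minpoly.ne_zero (Matrix.isIntegral A)
  have hroots : ∀ i, (minpoly ℝ A).IsRoot (l i) := by
    intro i
    apply root_minpoly_of_eigen
    rw [hcp]
    simp only [Polynomial.eval_prod, Polynomial.eval_sub, Polynomial.eval_X, Polynomial.eval_C]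
    exact Finset.prod_eq_zero (Finset.mem_univ i) (by ring)
  have hmindeg : n ≤ (minpoly ℝ A).natDegree := by
    have hnd : (Finset.univ.val.map l).Nodup := Finset.univ.nodup.map hl
    have hle : Finset.univ.val.map l ≤ (minpoly ℝ A).roots := by
      rw [Multiset.le_iff_subset hnd]
      intro x hx
      obtain ⟨i, _, rfl⟩ := Multiset.mem_map.mp hx
      exact (Polynomial.mem_roots hmne).mpr (hroots i)
    calc n = Multiset.card (Finset.univ.val.map l) := by simp
      _ ≤ Multiset.card (minpoly ℝ A).roots := Multiset.card_le_card hle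
      _ ≤ (minpoly ℝ A).natDegree := Polynomial.card_roots' _
  have := Polynomial.natDegree_le_of_dvd hmin hpne
  omega
end

section
/- Let D₁ be the diagonal operator on ℓ²(ℕ) with diagonal sequence (1, 1/2, 1/3, …) and let D₂ be the diagonal operator on ℓ²(ℕ) with diagonal sequence (0, 1, 1/2, 1/3, …). Then D₁ and D₂ are approximately unitarily equivalent, but they are not unitarily equivalent (there is no single unitary U on ℓ²(ℕ) with D₁ = U* D₂ U). -/
/-- The complex Hilbert space `ℓ²(ℕ)`. -/
noncomputable abbrev ellTwo : Type := lp (fun _ : ℕ => ℂ) 2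

/-- The standard orthonormal basis vectors of `ℓ²(ℕ)`. -/
noncomputable def stdBasis (n : ℕ) : ellTwo := lp.single 2 n 1

/-- Conjugation of an operator `T` on `H₂` by a unitary isomorphism `U : H₁ ≃ H₂`,
giving the operator `U* T U` on `H₁`. -/
noncomputable def conjOp {H₁ H₂ : Type*} [NormedAddCommGroup H₁] [InnerProductSpace ℂ H₁]
    [NormedAddCommGroup H₂] [InnerProductSpace ℂ H₂]
    (U : H₁ ≃ₗᵢ[ℂ] H₂) (T : H₂ →L[ℂ] H₂) : H₁ →L[ℂ] H₁ :=
  U.symm.toLinearIsometry.toContinuousLinearMap ∘L T ∘L U.toLinearIsometry.toContinuousLinearMap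

/-- Two bounded operators `T₁` and `T₂` on complex Hilbert spaces `H₁` and `H₂` are
approximately unitarily equivalent if there is a sequence of unitary isomorphisms
`U n : H₁ ≃ H₂` with `‖T₁ - (U n)* T₂ (U n)‖ → 0`. -/
def ApproxUnitarilyEquiv {H₁ H₂ : Type*} [NormedAddCommGroup H₁] [InnerProductSpace ℂ H₁]
    [NormedAddCommGroup H₂] [InnerProductSpace ℂ H₂]
    (T₁ : H₁ →L[ℂ] H₁) (T₂ : H₂ →L[ℂ] H₂) : Prop :=
  ∃ U : ℕ → (H₁ ≃ₗᵢ[ℂ] H₂),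
    Filter.Tendsto (fun n => ‖T₁ - conjOp (U n) T₂‖) Filter.atTop (nhds 0)

open scoped ENNReal

namespace AuxDiag

lemma two_toReal : ((2 : ℝ≥0∞)).toReal = 2 := by simp

lemma memℓp_mul {d : ℕ → ℂ} {C : ℝ} (hd : ∀ n, ‖d n‖ ≤ C) (x : ellTwo) :
    Memℓp (fun n => d n * x n) (2 : ℝ≥0∞) := by
  apply memℓp_gen
  have hx : Summable fun n => ‖x n‖ ^ (2 : ℝ≥0∞).toReal :=
    (lp.memℓp x).summable (by rw [two_toReal]; norm_num)
  refine Summable.of_nonneg_of_le (fun n => by positivity)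
    (fun n => ?_) (hx.mul_left (C ^ (2:ℝ≥0∞).toReal))
  rw [two_toReal]
  have h1 := hd n
  have hC : 0 ≤ C := le_trans (norm_nonneg _) h1
  calc ‖d n * x n‖ ^ (2:ℝ) = (‖d n‖ * ‖x n‖) ^ (2:ℝ) := by rw [norm_mul]
    _ ≤ (C * ‖x n‖) ^ (2:ℝ) := Real.rpow_le_rpow (by positivity)
        (mul_le_mul_of_nonneg_right h1 (norm_nonneg _)) (by norm_num)
    _ = C ^ (2:ℝ) * ‖x n‖ ^ (2:ℝ) := Real.mul_rpow hC (norm_nonneg _)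

noncomputable def mulSeq {d : ℕ → ℂ} {C : ℝ} (hd : ∀ n, ‖d n‖ ≤ C) (x : ellTwo) : ellTwo :=
  ⟨fun n => d n * x n, memℓp_mul hd x⟩

@[simp] lemma mulSeq_apply {d : ℕ → ℂ} {C : ℝ} (hd : ∀ n, ‖d n‖ ≤ C) (x : ellTwo) (n : ℕ) :
    (mulSeq hd x) n = d n * x n := rfl

lemma norm_mulSeq_le {d : ℕ → ℂ} {C : ℝ} (hC : 0 ≤ C) (hd : ∀ n, ‖d n‖ ≤ C) (x : ellTwo) :
    ‖mulSeq hd x‖ ≤ C * ‖x‖ := by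
  have h2 : (0:ℝ) < (2:ℝ≥0∞).toReal := by rw [two_toReal]; norm_num
  by_contra hlt
  push_neg at hlt
  have key : (C * ‖x‖) ^ (2:ℝ≥0∞).toReal < ‖mulSeq hd x‖ ^ (2:ℝ≥0∞).toReal :=
    Real.rpow_lt_rpow (by positivity) hlt h2
  refine absurd ?_ (not_le_of_gt key)
  rw [lp.norm_rpow_eq_tsum h2]
  have hx := lp.norm_rpow_eq_tsum h2 x
  have hxs : Summable fun n => ‖x n‖ ^ (2:ℝ≥0∞).toReal :=
    (lp.memℓp x).summable (by rw [two_toReal]; norm_num)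
  calc ∑' n, ‖(mulSeq hd x) n‖ ^ (2:ℝ≥0∞).toReal
      ≤ ∑' n, C ^ (2:ℝ≥0∞).toReal * ‖x n‖ ^ (2:ℝ≥0∞).toReal := by
        refine Summable.tsum_le_tsum (fun n => ?_) ?_ (hxs.mul_left _)
        · rw [mulSeq_apply, two_toReal]
          calc ‖d n * x n‖ ^ (2:ℝ) = (‖d n‖ * ‖x n‖) ^ (2:ℝ) := by rw [norm_mul]
            _ ≤ (C * ‖x n‖) ^ (2:ℝ) := Real.rpow_le_rpow (by positivity)
                (mul_le_mul_of_nonneg_right (hd n) (norm_nonneg _)) (by norm_num)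
            _ = C ^ (2:ℝ) * ‖x n‖ ^ (2:ℝ) := Real.mul_rpow hC (norm_nonneg _)
        · refine Summable.of_nonneg_of_le (fun n => by positivity) (fun n => ?_)
            (hxs.mul_left (C ^ (2:ℝ≥0∞).toReal))
          rw [mulSeq_apply, two_toReal]
          calc ‖d n * x n‖ ^ (2:ℝ) = (‖d n‖ * ‖x n‖) ^ (2:ℝ) := by rw [norm_mul]
            _ ≤ (C * ‖x n‖) ^ (2:ℝ) := Real.rpow_le_rpow (by positivity)
                (mul_le_mul_of_nonneg_right (hd n) (norm_nonneg _)) (by norm_num)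
            _ = C ^ (2:ℝ) * ‖x n‖ ^ (2:ℝ) := Real.mul_rpow hC (norm_nonneg _)
    _ = C ^ (2:ℝ≥0∞).toReal * ∑' n, ‖x n‖ ^ (2:ℝ≥0∞).toReal := tsum_mul_left
    _ = (C * ‖x‖) ^ (2:ℝ≥0∞).toReal := by rw [← hx, Real.mul_rpow hC (norm_nonneg _)]

/-- The multiplication (diagonal) operator. -/
noncomputable def mulOp {d : ℕ → ℂ} {C : ℝ} (hC : 0 ≤ C) (hd : ∀ n, ‖d n‖ ≤ C) :
    ellTwo →L[ℂ] ellTwo :=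
  LinearMap.mkContinuous
    { toFun := mulSeq hd
      map_add' := fun x y => lp.ext <| funext fun n => by
        simp [mulSeq_apply, lp.coeFn_add, mul_add]
      map_smul' := fun c x => lp.ext <| funext fun n => by
        simp [mulSeq_apply, lp.coeFn_smul, smul_eq_mul]
        ring }
    C (norm_mulSeq_le hC hd)

@[simp] lemma mulOp_apply {d : ℕ → ℂ} {C : ℝ} (hC : 0 ≤ C) (hd : ∀ n, ‖d n‖ ≤ C)
    (x : ellTwo) (n : ℕ) : (mulOp hC hd x) n = d n * x n := rfl

lemma norm_mulOp_le {d : ℕ → ℂ} {C : ℝ} (hC : 0 ≤ C) (hd : ∀ n, ‖d n‖ ≤ C)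
    {C' : ℝ} (hC' : 0 ≤ C') (hd' : ∀ n, ‖d n‖ ≤ C') : ‖mulOp hC hd‖ ≤ C' :=
  ContinuousLinearMap.opNorm_le_bound _ hC' fun x => norm_mulSeq_le hC' hd' x

lemma single_eq_smul (x : ellTwo) (n : ℕ) :
    lp.single 2 n (x n) = x n • stdBasis n := by
  rw [stdBasis, ← lp.single_smul]
  norm_num

/-- Two continuous linear maps agreeing on the standard basis agree. -/
lemma ext_basis {T S : ellTwo →L[ℂ] ellTwo}
    (h : ∀ n, T (stdBasis n) = S (stdBasis n)) : T = S := by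
  refine ContinuousLinearMap.ext fun x => ?_
  have hs : HasSum (fun n => lp.single 2 n (x n)) x :=
    lp.hasSum_single (by norm_num) x
  have hT : HasSum (fun n => T (lp.single 2 n (x n))) (T x) := hs.mapL T
  have hS : HasSum (fun n => S (lp.single 2 n (x n))) (S x) := hs.mapL S
  refine hT.unique ?_
  convert hS using 2 with n
  rw [single_eq_smul, map_smul, map_smul, h n]

lemma mulOp_stdBasis {d : ℕ → ℂ} {C : ℝ} (hC : 0 ≤ C) (hd : ∀ n, ‖d n‖ ≤ C) (n : ℕ) :
    mulOp hC hd (stdBasis n) = d n • stdBasis n := by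
  refine lp.ext (funext fun m => ?_)
  rw [mulOp_apply, lp.coeFn_smul, Pi.smul_apply, smul_eq_mul]
  by_cases hmn : m = n
  · subst hmn; rfl
  · rw [stdBasis, lp.single_apply_ne 2 n _ hmn, mul_zero, mul_zero]

/-- Reindexing linear map. -/
noncomputable def reindexLM (e : ℕ ≃ ℕ) : ellTwo →ₗ[ℂ] ellTwo where
  toFun x := ⟨fun n => x (e n), by
    apply memℓp_gen
    have hx : Summable fun n => ‖x n‖ ^ (2 : ℝ≥0∞).toReal :=
      (lp.memℓp x).summable (by rw [two_toReal]; norm_num)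
    exact (e.summable_iff (f := fun n => ‖x n‖ ^ (2 : ℝ≥0∞).toReal)).2 hx⟩
  map_add' x y := lp.ext <| funext fun n => by simp [lp.coeFn_add]; rfl
  map_smul' c x := lp.ext <| funext fun n => by simp [lp.coeFn_smul]

@[simp] lemma reindexLM_apply (e : ℕ ≃ ℕ) (x : ellTwo) (n : ℕ) :
    (reindexLM e x) n = x (e n) := rfl

/-- Reindexing unitary. -/
noncomputable def reindex (e : ℕ ≃ ℕ) : ellTwo ≃ₗᵢ[ℂ] ellTwo where
  toLinearMap := reindexLM e
  invFun := reindexLM e.symm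
  left_inv x := lp.ext <| funext fun n => by simp
  right_inv x := lp.ext <| funext fun n => by simp
  norm_map' x := by
    have h2 : (0:ℝ) < (2:ℝ≥0∞).toReal := by rw [two_toReal]; norm_num
    rw [lp.norm_eq_tsum_rpow h2, lp.norm_eq_tsum_rpow h2 x]
    congr 1
    exact e.tsum_eq (f := fun n => ‖x n‖ ^ (2:ℝ≥0∞).toReal)

@[simp] lemma reindex_apply (e : ℕ ≃ ℕ) (x : ellTwo) (n : ℕ) :
    (reindex e x) n = x (e n) := rfl

@[simp] lemma reindex_symm_apply (e : ℕ ≃ ℕ) (x : ellTwo) (n : ℕ) :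
    ((reindex e).symm x) n = x (e.symm n) := rfl

lemma conj_mulOp (e : ℕ ≃ ℕ) {d : ℕ → ℂ} {C : ℝ} (hC : 0 ≤ C) (hd : ∀ n, ‖d n‖ ≤ C) :
    conjOp (reindex e) (mulOp hC hd) =
      mulOp (d := fun n => d (e.symm n)) hC (fun n => hd (e.symm n)) := by
  refine ContinuousLinearMap.ext fun x => lp.ext (funext fun n => ?_)
  simp [conjOp]

lemma mulOp_sub {d d' d'' : ℕ → ℂ} {C C' C'' : ℝ} (hC : 0 ≤ C) (hd : ∀ n, ‖d n‖ ≤ C)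
    (hC' : 0 ≤ C') (hd' : ∀ n, ‖d' n‖ ≤ C') (hC'' : 0 ≤ C'') (hd'' : ∀ n, ‖d'' n‖ ≤ C'')
    (h : ∀ n, d'' n = d n - d' n) :
    mulOp hC hd - mulOp hC' hd' = mulOp hC'' hd'' := by
  refine ContinuousLinearMap.ext fun x => lp.ext (funext fun n => ?_)
  simp only [ContinuousLinearMap.sub_apply, lp.coeFn_sub, Pi.sub_apply, mulOp_apply, h n]
  ring

/-- The cyclic permutation `0 ↦ 1 ↦ ⋯ ↦ N ↦ 0` of `ℕ` fixing everything above `N`. -/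
def cyc (N : ℕ) : ℕ ≃ ℕ where
  toFun n := if n < N then n + 1 else if n = N then 0 else n
  invFun n := if n = 0 then N else if n ≤ N then n - 1 else n
  left_inv n := by
    beta_reduce
    rcases lt_trichotomy n N with h | h | h
    · rw [if_pos h, if_neg (by omega : ¬ n + 1 = 0), if_pos (by omega : n + 1 ≤ N)]
      omega
    · subst h
      rw [if_neg (lt_irrefl _), if_pos rfl, if_pos rfl]
    · have e1 : (if n < N then n + 1 else if n = N then 0 else n) = n := by
        rw [if_neg (by omega), if_neg (by omega)]
      rw [e1, if_neg (by omega), if_neg (by omega)]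
  right_inv n := by
    beta_reduce
    rcases eq_or_ne n 0 with h | h
    · subst h
      rw [if_pos rfl, if_neg (lt_irrefl _), if_pos rfl]
    · rcases le_or_gt n N with h2 | h2
      · rw [if_neg h, if_pos h2, if_pos (by omega : n - 1 < N)]
        omega
      · have e1 : (if n = 0 then N else if n ≤ N then n - 1 else n) = n := by
          rw [if_neg h, if_neg (by omega)]
        rw [e1, if_neg (by omega), if_neg (by omega)]

lemma cyc_lt {N n : ℕ} (h : n < N) : cyc N n = n + 1 := by
  simp only [cyc, Equiv.coe_fn_mk, if_pos h]

lemma cyc_self (N : ℕ) : cyc N N = 0 := by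
  simp [cyc]

lemma cyc_gt {N n : ℕ} (h : N < n) : cyc N n = n := by
  simp only [cyc, Equiv.coe_fn_mk]
  rw [if_neg (by omega), if_neg (by omega)]

lemma norm_invnat (n : ℕ) : ‖(1/((n:ℂ)+1))‖ = 1/((n:ℝ)+1) := by
  rw [show (1/((n:ℂ)+1)) = (((1/((n:ℝ)+1)):ℝ):ℂ) by push_cast; ring]
  rw [Complex.norm_real, Real.norm_eq_abs, abs_of_nonneg (by positivity)]

/-- Diagonal sequence of `D₁`. -/
noncomputable def d1 : ℕ → ℂ := fun n => 1/((n:ℂ)+1)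

/-- Diagonal sequence of `D₂`. -/
noncomputable def d2 : ℕ → ℂ := fun n => match n with
  | 0 => 0
  | (k+1) => 1/((k:ℂ)+1)

lemma hd1 : ∀ n : ℕ, ‖d1 n‖ ≤ 1 := by
  intro n
  rw [show d1 n = 1/((n:ℂ)+1) from rfl, norm_invnat, div_le_one (by positivity)]
  have : (0:ℝ) ≤ (n:ℝ) := Nat.cast_nonneg n
  linarith

lemma hd2 : ∀ n : ℕ, ‖d2 n‖ ≤ 1 := by
  intro n
  match n with
  | 0 => simp [d2]
  | (k+1) => exact hd1 k

lemma mu_bound (N n : ℕ) : ‖d1 n - d2 (cyc N n)‖ ≤ 1/((N:ℝ)+1) := by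
  rcases lt_trichotomy n N with h | h | h
  · rw [cyc_lt h, show d2 (n+1) = d1 n from rfl, sub_self, norm_zero]
    positivity
  · subst h
    rw [cyc_self, show d2 0 = 0 from rfl, sub_zero,
      show d1 n = 1/((n:ℂ)+1) from rfl, norm_invnat]
  · rw [cyc_gt h]
    obtain ⟨k, rfl⟩ : ∃ k, n = k + 1 := ⟨n - 1, by omega⟩
    have hNk : (N:ℝ) ≤ (k:ℝ) := by exact_mod_cast Nat.lt_succ_iff.mp h
    have heq : d1 (k+1) - d2 (k+1) = (((1/((k:ℝ)+2) - 1/((k:ℝ)+1)):ℝ):ℂ) := by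
      rw [show d1 (k+1) = 1/(((k+1:ℕ):ℂ)+1) from rfl, show d2 (k+1) = 1/((k:ℂ)+1) from rfl]
      push_cast
      ring
    rw [heq, Complex.norm_real, Real.norm_eq_abs, abs_sub_comm,
      abs_of_nonneg (sub_nonneg.2 (one_div_le_one_div_of_le (by positivity) (by linarith)))]
    have h1 : 1/((k:ℝ)+1) ≤ 1/((N:ℝ)+1) :=
      one_div_le_one_div_of_le (by positivity) (by linarith)
    have h2 : (0:ℝ) ≤ 1/((k:ℝ)+2) := by positivity
    linarith

lemma mu_bound_one (N n : ℕ) : ‖d1 n - d2 (cyc N n)‖ ≤ 1 := by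
  refine (mu_bound N n).trans ?_
  rw [div_le_one (by positivity)]
  have : (0:ℝ) ≤ (N:ℝ) := Nat.cast_nonneg N
  linarith

lemma d1_ne_zero (n : ℕ) : d1 n ≠ 0 := by
  rw [show d1 n = 1/((n:ℂ)+1) from rfl]
  exact one_div_ne_zero (Nat.cast_add_one_ne_zero n)

end AuxDiag

/-- The diagonal operators on `ℓ²(ℕ)` with diagonal sequences `(1, 1/2, 1/3, …)` and
`(0, 1, 1/2, 1/3, …)` are approximately unitarily equivalent, but they are not unitarily
equivalent. -/
theorem diag_approx_equiv_not_unitarily_equiv (D₁ D₂ : ellTwo →L[ℂ] ellTwo)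
    (hD₁ : ∀ n : ℕ, D₁ (stdBasis n) = (1 / ((n : ℂ) + 1)) • stdBasis n)
    (hD₂zero : D₂ (stdBasis 0) = 0)
    (hD₂succ : ∀ n : ℕ, D₂ (stdBasis (n + 1)) = (1 / ((n : ℂ) + 1)) • stdBasis (n + 1)) :
    ApproxUnitarilyEquiv D₁ D₂ ∧
      ¬ ∃ U : ellTwo ≃ₗᵢ[ℂ] ellTwo, D₁ = conjOp U D₂ := by
  have hD1eq : D₁ = AuxDiag.mulOp zero_le_one AuxDiag.hd1 := by
    refine AuxDiag.ext_basis fun n => ?_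
    rw [hD₁ n, AuxDiag.mulOp_stdBasis]
    rfl
  have hD2eq : D₂ = AuxDiag.mulOp zero_le_one AuxDiag.hd2 := by
    refine AuxDiag.ext_basis fun n => ?_
    match n with
    | 0 =>
      rw [hD₂zero, AuxDiag.mulOp_stdBasis, show AuxDiag.d2 0 = 0 from rfl, zero_smul]
    | (k+1) =>
      rw [hD₂succ k, AuxDiag.mulOp_stdBasis]
      rfl
  constructor
  · refine ⟨fun N => AuxDiag.reindex (AuxDiag.cyc N).symm, ?_⟩
    have hb : ∀ N : ℕ,
        ‖D₁ - conjOp (AuxDiag.reindex (AuxDiag.cyc N).symm) D₂‖ ≤ 1/((N:ℝ)+1) := by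
      intro N
      rw [hD1eq, hD2eq, AuxDiag.conj_mulOp,
        AuxDiag.mulOp_sub zero_le_one AuxDiag.hd1 zero_le_one
          (fun n => AuxDiag.hd2 ((AuxDiag.cyc N).symm.symm n)) zero_le_one
          (AuxDiag.mu_bound_one N) (fun n => by rw [Equiv.symm_symm])]
      exact AuxDiag.norm_mulOp_le _ _ (by positivity) (AuxDiag.mu_bound N)
    exact squeeze_zero (fun N => norm_nonneg _) hb tendsto_one_div_add_atTop_nhds_zero_nat
  · rintro ⟨V, hV⟩
    have h0 : D₁ (V.symm (stdBasis 0)) = 0 := by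
      rw [hV]
      simp [conjOp, hD₂zero]
    rw [hD1eq] at h0
    have hx : ∀ n, (V.symm (stdBasis 0)) n = 0 := by
      intro n
      have hc := congrArg (fun v : ellTwo => v n) h0
      simp only [AuxDiag.mulOp_apply, lp.coeFn_zero, Pi.zero_apply] at hc
      rcases mul_eq_zero.1 hc with h | h
      · exact absurd h (AuxDiag.d1_ne_zero n)
      · exact h
    have hx0 : V.symm (stdBasis 0) = 0 :=
      lp.ext (funext fun n => by rw [hx n]; simp [lp.coeFn_zero])
    have hb0 : stdBasis 0 = 0 := by
      have := congrArg V hx0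
      rwa [LinearIsometryEquiv.apply_symm_apply, map_zero] at this
    have h1 : (stdBasis 0 : ellTwo) 0 = 1 := lp.single_apply_self 2 0 1
    rw [hb0] at h1
    simp [lp.coeFn_zero] at h1
end
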